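/- Let G be an ample Hausdorff groupoid and let σ : G^(2) → R^× be a continuous (normalised) 2-cocycle. Then the twisted Steinberg algebra A_R(G,σ) is an associative R-algebra under the twisted convolution product (f *_σ g)(γ) = Σ_{(α,β)∈G^(2), αβ=γ} σ(α,β) f(α) g(β). If moreover R has a T-inverse involution r ↦ r̄ for some subgroup T ≤ R^× and σ is T-valued, then f*(γ) := σ(γ,γ^{-1})^{-1} · conj(f(γ^{-1})) defines an involution making A_R(G,σ) a *-algebra over R (in particular (f *_σ g)* = g* *_σ f* and (f*)* = f). -/

import Mathlib

/-!
Common definitions: topological groupoids, bisections, étale/ample groupoids,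
continuous `Rˣ`-valued 2-cocycles, and twisted Steinberg algebras.

A groupoid is modelled as a type `G` together with a composability predicate
`comp`, a (partial, junk-valued off composable pairs) multiplication `mul`,
and an inversion `inv`.  The range and source maps are `r γ = γ γ⁻¹` and
`s γ = γ⁻¹ γ`, and the unit space is the set of fixed points of `r`.
-/

namespace TwistedSteinberg

structure GroupoidStruct (G : Type*) where
  comp : G → G → Prop
  mul : G → G → G
  inv : G → G

namespace GroupoidStruct

variable {G : Type*}

/-- The range map `r γ = γ γ⁻¹`. -/
def r (T : GroupoidStruct G) (γ : G) : G := T.mul γ (T.inv γ)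

/-- The source map `s γ = γ⁻¹ γ`. -/
def s (T : GroupoidStruct G) (γ : G) : G := T.mul (T.inv γ) γ

/-- The unit space `G⁰`. -/
def unitSpace (T : GroupoidStruct G) : Set G := {x | T.r x = x}

/-- The axioms making `(comp, mul, inv)` a groupoid. -/
structure IsGroupoid (T : GroupoidStruct G) : Prop where
  comp_iff : ∀ a b, T.comp a b ↔ T.s a = T.r b
  assoc : ∀ a b c, T.comp a b → T.comp b c →
    T.mul (T.mul a b) c = T.mul a (T.mul b c)
  inv_inv : ∀ a, T.inv (T.inv a) = a
  r_mul : ∀ a b, T.comp a b → T.r (T.mul a b) = T.r a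
  s_mul : ∀ a b, T.comp a b → T.s (T.mul a b) = T.s b
  r_inv : ∀ a, T.r (T.inv a) = T.s a
  s_inv : ∀ a, T.s (T.inv a) = T.r a
  r_mul_self : ∀ a, T.mul (T.r a) a = a
  mul_s_self : ∀ a, T.mul a (T.s a) = a
  r_unit : ∀ a, T.r a ∈ T.unitSpace
  s_unit : ∀ a, T.s a ∈ T.unitSpace

/-- A topological groupoid: inversion is continuous and multiplication is
continuous on the set of composable pairs. -/
structure IsTopGroupoid [TopologicalSpace G] (T : GroupoidStruct G)
    extends IsGroupoid T : Prop where
  continuous_inv : Continuous T.inv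
  continuousOn_mul : ContinuousOn (fun p : G × G => T.mul p.1 p.2)
    {p : G × G | T.comp p.1 p.2}

/-- `B` is a bisection if it is contained in an open set `U` on which both `r`
and `s` restrict to homeomorphisms onto open subsets. -/
def IsBisection [TopologicalSpace G] (T : GroupoidStruct G) (B : Set G) : Prop :=
  ∃ U : Set G, B ⊆ U ∧ IsOpen U ∧ Set.InjOn T.r U ∧ Set.InjOn T.s U ∧
    ∀ V : Set G, V ⊆ U → IsOpen V → IsOpen (T.r '' V) ∧ IsOpen (T.s '' V)

/-- A groupoid is étale if its range map is a local homeomorphism. -/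
def IsEtale [TopologicalSpace G] (T : GroupoidStruct G) : Prop :=
  IsLocalHomeomorph T.r

/-- A groupoid is ample if it has a basis of compact open bisections. -/
def IsAmple [TopologicalSpace G] (T : GroupoidStruct G) : Prop :=
  TopologicalSpace.IsTopologicalBasis
    {B : Set G | IsCompact B ∧ IsOpen B ∧ T.IsBisection B}

/-- The product `BD` of two subsets of a groupoid. -/
def setMul (T : GroupoidStruct G) (B D : Set G) : Set G :=
  {x | ∃ a ∈ B, ∃ b ∈ D, T.comp a b ∧ T.mul a b = x}

end GroupoidStruct

open GroupoidStruct

section Cocycle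

variable {G R : Type*} [TopologicalSpace G] [CommRing R] [TopologicalSpace R]

/-- A continuous normalised `Rˣ`-valued 2-cocycle on the groupoid `T`. -/
structure IsCocycle (T : GroupoidStruct G) (σ : G → G → Rˣ) : Prop where
  continuousOn : ContinuousOn (fun p : G × G => ((σ p.1 p.2 : Rˣ) : R))
    {p : G × G | T.comp p.1 p.2}
  cocycle : ∀ a b c, T.comp a b → T.comp b c →
    σ a b * σ (T.mul a b) c = σ a (T.mul b c) * σ b c
  norm_left : ∀ γ : G, σ (T.r γ) γ = 1
  norm_right : ∀ γ : G, σ γ (T.s γ) = 1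

/-- The underlying `R`-module of the (twisted) Steinberg algebra: locally
constant compactly supported functions `G → R`. -/
def steinbergCarrier (G R : Type*) [TopologicalSpace G] [Zero R] : Set (G → R) :=
  {f | IsLocallyConstant f ∧ IsCompact (Function.support f)}

/-- The twisted convolution product
`(f *σ g)(γ) = ∑_{αβ = γ} σ(α,β) f(α) g(β)`. -/
noncomputable def conv (T : GroupoidStruct G) (σ : G → G → Rˣ)
    (f g : G → R) (γ : G) : R :=
  ∑ᶠ (p : G × G) (_ : T.comp p.1 p.2 ∧ T.mul p.1 p.2 = γ),
    ((σ p.1 p.2 : Rˣ) : R) * f p.1 * g p.2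

/-- A `T`-inverse involution on `R`: a ring involution restricting to
inversion on the subgroup `Tsub ≤ Rˣ`. -/
def IsTInverseInvolution (Tsub : Subgroup Rˣ) (c : R → R) : Prop :=
  c 1 = 1 ∧ (∀ x y, c (x + y) = c x + c y) ∧ (∀ x y, c (x * y) = c x * c y) ∧
    (∀ x, c (c x) = x) ∧ ∀ z : Rˣ, z ∈ Tsub → c ((z : Rˣ) : R) = ((z⁻¹ : Rˣ) : R)

/-- The twisted involution `f*(γ) = σ(γ,γ⁻¹)⁻¹ ⬝ c (f (γ⁻¹))`. -/
noncomputable def convStar (T : GroupoidStruct G) (σ : G → G → Rˣ) (c : R → R)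
    (f : G → R) (γ : G) : R :=
  (((σ γ (T.inv γ))⁻¹ : Rˣ) : R) * c (f (T.inv γ))

end Cocycle
section Twist

/-!
Discrete twists `G⁰ × T → Σ → G` over a Hausdorff étale groupoid `G`,
where `T = Tsub` is a subgroup of the units `Rˣ` of a discrete commutative
unital ring `R`.  The inclusion is modelled as a map `i : G → Tsub → Σ`
(only its values `i x z` for `x ∈ G⁰` are relevant).
-/

variable {G S R : Type*} [TopologicalSpace G] [TopologicalSpace S]
  [CommRing R] [TopologicalSpace R]

/-- A discrete twist `(Σ, i, q)` by `Tsub ≤ Rˣ` over `G`. -/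
structure IsDiscreteTwist (TG : GroupoidStruct G) (TS : GroupoidStruct S)
    (Tsub : Subgroup Rˣ) (i : G → Tsub → S) (q : S → G) : Prop where
  topS : TS.IsTopGroupoid
  t2S : T2Space S
  locallyCompactS : LocallyCompactSpace S
  unit_eq : TS.unitSpace = (fun x => i x 1) '' TG.unitSpace
  i_continuousOn : ContinuousOn (fun p : G × Tsub => i p.1 p.2)
    (TG.unitSpace ×ˢ (Set.univ : Set Tsub))
  i_injective : ∀ x ∈ TG.unitSpace, ∀ x' ∈ TG.unitSpace, ∀ z z' : Tsub,
    i x z = i x' z' → x = x' ∧ z = z'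
  i_comp : ∀ x ∈ TG.unitSpace, ∀ z w : Tsub, TS.comp (i x z) (i x w)
  i_mul : ∀ x ∈ TG.unitSpace, ∀ z w : Tsub, TS.mul (i x z) (i x w) = i x (z * w)
  i_inv : ∀ x ∈ TG.unitSpace, ∀ z : Tsub, TS.inv (i x z) = i x z⁻¹
  q_continuous : Continuous q
  q_surjective : Function.Surjective q
  q_quotient : ∀ V : Set G, IsOpen V ↔ IsOpen (q ⁻¹' V)
  q_comp : ∀ ε δ, TS.comp ε δ → TG.comp (q ε) (q δ)
  q_mul : ∀ ε δ, TS.comp ε δ → q (TS.mul ε δ) = TG.mul (q ε) (q δ)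
  q_inv : ∀ ε, q (TS.inv ε) = TG.inv (q ε)
  q_i : ∀ x ∈ TG.unitSpace, ∀ z : Tsub, q (i x z) = x
  i_q_unit : ∀ ε ∈ TS.unitSpace, i (q ε) 1 = ε
  q_unit_mem : ∀ ε ∈ TS.unitSpace, q ε ∈ TG.unitSpace
  exact_fibre : ∀ x ∈ TG.unitSpace, ∀ ε, q ε = x ↔ ∃ z : Tsub, ε = i x z
  central_comp_left : ∀ (ε : S) (z : Tsub), TS.comp (i (TG.r (q ε)) z) ε
  central_comp_right : ∀ (ε : S) (z : Tsub), TS.comp ε (i (TG.s (q ε)) z)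
  central : ∀ (ε : S) (z : Tsub),
    TS.mul (i (TG.r (q ε)) z) ε = TS.mul ε (i (TG.s (q ε)) z)
  locally_trivial : ∀ α : G, ∃ B : Set G, α ∈ B ∧ IsOpen B ∧ TG.IsBisection B ∧
    ∃ P : G → S, ContinuousOn P B ∧ (∀ β ∈ B, q (P β) = β) ∧
      Set.BijOn (fun p : G × Tsub => TS.mul (i (TG.r p.1) p.2) (P p.1))
        (B ×ˢ (Set.univ : Set Tsub)) (q ⁻¹' B) ∧
      ContinuousOn (fun p : G × Tsub => TS.mul (i (TG.r p.1) p.2) (P p.1))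
        (B ×ˢ (Set.univ : Set Tsub)) ∧
      ∀ V ⊆ B ×ˢ (Set.univ : Set Tsub), IsOpen V →
        IsOpen ((fun p : G × Tsub => TS.mul (i (TG.r p.1) p.2) (P p.1)) '' V)

/-- The action `z ⬝ ε = i(r(ε), z) ε` of `Tsub` on the twist `Σ`. -/
def twistAct (TG : GroupoidStruct G) (TS : GroupoidStruct S)
    {Tsub : Subgroup Rˣ} (i : G → Tsub → S) (q : S → G) (z : Tsub) (ε : S) : S :=
  TS.mul (i (TG.r (q ε)) z) ε

/-- A continuous global section `P : G → Σ` of the twist. -/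
def IsGlobalSection (TG : GroupoidStruct G) (TS : GroupoidStruct S)
    (q : S → G) (P : G → S) : Prop :=
  Continuous P ∧ (∀ γ, q (P γ) = γ) ∧ ∀ x ∈ TG.unitSpace, P x ∈ TS.unitSpace

/-- The 2-cocycle `σ` is induced by the section `P`, i.e.
`P(α) P(β) P(αβ)⁻¹ = i(r(α), σ(α,β))` for composable `(α,β)`. -/
def InducesCocycle (TG : GroupoidStruct G) (TS : GroupoidStruct S)
    {Tsub : Subgroup Rˣ} (i : G → Tsub → S) (P : G → S) (σ : G → G → Tsub) : Prop :=
  ∀ α β, TG.comp α β →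
    TS.mul (TS.mul (P α) (P β)) (TS.inv (P (TG.mul α β))) = i (TG.r α) (σ α β)

/-- A continuous normalised 2-cocycle with values in the subgroup `Tsub ≤ Rˣ`. -/
structure IsCocycleSub (TG : GroupoidStruct G) (Tsub : Subgroup Rˣ)
    (σ : G → G → Tsub) : Prop where
  continuousOn : ContinuousOn (fun p : G × G => (((σ p.1 p.2 : Rˣ)) : R))
    {p : G × G | TG.comp p.1 p.2}
  cocycle : ∀ a b c, TG.comp a b → TG.comp b c →
    σ a b * σ (TG.mul a b) c = σ a (TG.mul b c) * σ b c
  norm_left : ∀ γ : G, σ (TG.r γ) γ = 1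
  norm_right : ∀ γ : G, σ γ (TG.s γ) = 1

/-- `σ` and `τ` are cohomologous via the continuous function `b : G → Tsub`. -/
def CohomologousVia (TG : GroupoidStruct G) {Tsub : Subgroup Rˣ}
    (σ τ : G → G → Tsub) (b : G → Tsub) : Prop :=
  Continuous (fun γ : G => ((b γ : Rˣ) : R)) ∧ (∀ x ∈ TG.unitSpace, b x = 1) ∧
    ∀ α β, TG.comp α β → σ α β * (τ α β)⁻¹ = b α * b β * (b (TG.mul α β))⁻¹

/-- The twisted groupoid `G ×_σ T`. -/
def prodTwist (TG : GroupoidStruct G) (Tsub : Subgroup Rˣ) (σ : G → G → Tsub) :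
    GroupoidStruct (G × Tsub) where
  comp p p' := TG.comp p.1 p'.1
  mul p p' := (TG.mul p.1 p'.1, σ p.1 p'.1 * p.2 * p'.2)
  inv p := (TG.inv p.1, (σ p.1 (TG.inv p.1))⁻¹ * p.2⁻¹)

/-- The inclusion `i_σ : G⁰ × T → G ×_σ T`. -/
def prodTwistI (Tsub : Subgroup Rˣ) : G → Tsub → G × Tsub := fun x z => (x, z)

/-- The projection `q_σ : G ×_σ T → G`. -/
def prodTwistQ (Tsub : Subgroup Rˣ) : G × Tsub → G := fun p => p.1

/-- An isomorphism of discrete twists: a homeomorphism and groupoid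
isomorphism intertwining the inclusions and projections. -/
def IsTwistIso {S1 S2 : Type*} [TopologicalSpace S1] [TopologicalSpace S2]
    (TG : GroupoidStruct G) (T1 : GroupoidStruct S1) (T2 : GroupoidStruct S2)
    {Tsub : Subgroup Rˣ} (i1 : G → Tsub → S1) (q1 : S1 → G)
    (i2 : G → Tsub → S2) (q2 : S2 → G) (ψ : S1 → S2) : Prop :=
  Function.Bijective ψ ∧ Continuous ψ ∧ (∀ V : Set S1, IsOpen V → IsOpen (ψ '' V)) ∧
    (∀ δ ε, T1.comp δ ε → T2.comp (ψ δ) (ψ ε) ∧ ψ (T1.mul δ ε) = T2.mul (ψ δ) (ψ ε)) ∧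
    (∀ x ∈ TG.unitSpace, ∀ z : Tsub, ψ (i1 x z) = i2 x z) ∧
    ∀ ε, q2 (ψ ε) = q1 ε

/-- The carrier of the twisted Steinberg algebra `A_R(G; Σ)`: continuous
`Tsub`-equivariant functions `f : Σ → R` such that `q(supp f)` has compact
closure. -/
def twistCarrier (TG : GroupoidStruct G) (TS : GroupoidStruct S)
    {Tsub : Subgroup Rˣ} (i : G → Tsub → S) (q : S → G) : Set (S → R) :=
  {f | Continuous f ∧
    (∀ (z : Tsub) (ε : S), f (TS.mul (i (TG.r (q ε)) z) ε) = ((z : Rˣ) : R) * f ε) ∧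
    IsCompact (closure (q '' Function.support f))}

/-- The convolution `(f *_Σ g)(ε) = ∑_{γ ∈ G^{s(q(ε))}} f(ε P(γ)) g(P(γ)⁻¹)`. -/
noncomputable def twistConv (TG : GroupoidStruct G) (TS : GroupoidStruct S)
    (q : S → G) (P : G → S) (f g : S → R) (ε : S) : R :=
  ∑ᶠ (γ : G) (_ : TG.r γ = TG.s (q ε)), f (TS.mul ε (P γ)) * g (TS.inv (P γ))

/-- The involution `f*(ε) = c (f (ε⁻¹))` on `A_R(G; Σ)`. -/
def twistStar (TS : GroupoidStruct S) (c : R → R) (f : S → R) (ε : S) : R :=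
  c (f (TS.inv ε))

end Twist

/-! ### Auxiliary lemmas -/

section Aux

open GroupoidStruct Function Set

variable {G R : Type*}

namespace GroupoidStruct

variable {T : GroupoidStruct G}

lemma IsGroupoid.comp_inv_left (hG : T.IsGroupoid) (a : G) : T.comp (T.inv a) a :=
  (hG.comp_iff _ _).2 (hG.s_inv a)

lemma IsGroupoid.comp_inv_right (hG : T.IsGroupoid) (a : G) : T.comp a (T.inv a) :=
  (hG.comp_iff _ _).2 (hG.r_inv a).symm

lemma inv_mul_self (T : GroupoidStruct G) (a : G) :
    T.mul (T.inv a) a = T.s a := rfl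

lemma mul_inv_self (T : GroupoidStruct G) (a : G) :
    T.mul a (T.inv a) = T.r a := rfl

lemma IsGroupoid.eq_inv_mul (hG : T.IsGroupoid) {a b : G} (h : T.comp a b) :
    b = T.mul (T.inv a) (T.mul a b) := by
  rw [← hG.assoc _ _ _ (hG.comp_inv_left a) h]
  show b = T.mul (T.s a) b
  rw [(hG.comp_iff a b).1 h, hG.r_mul_self]

lemma IsGroupoid.eq_mul_inv (hG : T.IsGroupoid) {a b : G} (h : T.comp a b) :
    a = T.mul (T.mul a b) (T.inv b) := by
  have hb : T.comp b (T.inv b) := hG.comp_inv_right b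
  rw [hG.assoc _ _ _ h hb]
  show a = T.mul a (T.r b)
  rw [← (hG.comp_iff a b).1 h, hG.mul_s_self]

lemma IsGroupoid.comp_inv_mul (hG : T.IsGroupoid) {a b : G} (h : T.comp a b) :
    T.comp (T.inv a) (T.mul a b) := by
  rw [hG.comp_iff, hG.s_inv, hG.r_mul _ _ h]

lemma IsGroupoid.comp_mul_inv (hG : T.IsGroupoid) {a b : G} (h : T.comp a b) :
    T.comp (T.mul a b) (T.inv b) := by
  rw [hG.comp_iff, hG.r_inv, hG.s_mul _ _ h]

lemma IsGroupoid.comp_inv_inv (hG : T.IsGroupoid) {a b : G} (h : T.comp a b) :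
    T.comp (T.inv b) (T.inv a) := by
  rw [hG.comp_iff, hG.s_inv, hG.r_inv, (hG.comp_iff a b).1 h]

lemma IsGroupoid.inv_mul (hG : T.IsGroupoid) {a b : G} (h : T.comp a b) :
    T.inv (T.mul a b) = T.mul (T.inv b) (T.inv a) := by
  have hsab : T.s a = T.r b := (hG.comp_iff a b).1 h
  have h1 : T.comp (T.mul a b) (T.inv b) := hG.comp_mul_inv h
  have h2 : T.comp (T.inv b) (T.inv a) := hG.comp_inv_inv h
  have hcd : T.comp (T.mul a b) (T.mul (T.inv b) (T.inv a)) := by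
    rw [hG.comp_iff, hG.s_mul _ _ h, hG.r_mul _ _ h2, hG.r_inv]
  -- mul (a b) (b⁻¹ a⁻¹) = r (a b)
  have key : T.mul (T.mul a b) (T.mul (T.inv b) (T.inv a)) = T.r (T.mul a b) := by
    rw [← hG.assoc _ _ _ h1 h2, ← hG.eq_mul_inv h, hG.r_mul _ _ h]
    rfl
  have h3 : T.comp (T.inv (T.mul a b)) (T.mul a b) := hG.comp_inv_left _
  calc T.inv (T.mul a b)
      = T.mul (T.inv (T.mul a b))
          (T.mul (T.mul a b) (T.mul (T.inv b) (T.inv a))) := by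
        rw [key]
        have : T.r (T.mul a b) = T.s (T.inv (T.mul a b)) := (hG.s_inv _).symm
        rw [this, hG.mul_s_self]
    _ = T.mul (T.mul (T.inv (T.mul a b)) (T.mul a b)) (T.mul (T.inv b) (T.inv a)) :=
        (hG.assoc _ _ _ h3 hcd).symm
    _ = T.mul (T.s (T.mul a b)) (T.mul (T.inv b) (T.inv a)) := rfl
    _ = T.mul (T.r (T.mul (T.inv b) (T.inv a))) (T.mul (T.inv b) (T.inv a)) := by
        rw [hG.s_mul _ _ h, hG.r_mul _ _ h2, hG.r_inv]
    _ = T.mul (T.inv b) (T.inv a) := hG.r_mul_self _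

end GroupoidStruct

end Aux

section Aux2

open GroupoidStruct Function Set
open scoped Classical

variable {G : Type*} {R : Type*} [TopologicalSpace G] [CommRing R]
variable {T : GroupoidStruct G}

lemma contR (hT : T.IsTopGroupoid) : Continuous T.r := by
  have h : ∀ γ : G, (γ, T.inv γ) ∈ {p : G × G | T.comp p.1 p.2} :=
    fun γ => hT.toIsGroupoid.comp_inv_right γ
  have := hT.continuousOn_mul.comp_continuous
    (continuous_id.prodMk hT.continuous_inv) h
  exact this

lemma contS (hT : T.IsTopGroupoid) : Continuous T.s := by
  have h : ∀ γ : G, (T.inv γ, γ) ∈ {p : G × G | T.comp p.1 p.2} :=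
    fun γ => hT.toIsGroupoid.comp_inv_left γ
  have := hT.continuousOn_mul.comp_continuous
    (hT.continuous_inv.prodMk continuous_id) h
  exact this

lemma isClosed_compSet [T2Space G] (hT : T.IsTopGroupoid) :
    IsClosed {p : G × G | T.comp p.1 p.2} := by
  have he : {p : G × G | T.comp p.1 p.2} = {p | T.s p.1 = T.r p.2} :=
    Set.ext fun p => hT.comp_iff _ _
  rw [he]
  exact isClosed_eq ((contS hT).comp continuous_fst) ((contR hT).comp continuous_snd)

lemma lc_support_isOpen {f : G → R} (hf : IsLocallyConstant f) :
    IsOpen (support f) := by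
  have : support f = f ⁻¹' {(0 : R)}ᶜ := by
    ext x; simp [Function.mem_support]
  rw [this]; exact hf _

lemma lc_support_isClosed {f : G → R} (hf : IsLocallyConstant f) :
    IsClosed (support f) := by
  have : (support f)ᶜ = f ⁻¹' {(0 : R)} := by
    ext x; simp [Function.mem_support]
  rw [← isOpen_compl_iff, this]; exact hf _

/-- In an ample groupoid, the set of elements of the support of `f` with a
prescribed range is finite. -/
lemma fiber_finite (hample : T.IsAmple) {f : G → R}
    (hf : f ∈ steinbergCarrier G R) (x : G) :
    {α | f α ≠ 0 ∧ T.r α = x}.Finite := by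
  obtain ⟨hlc, hcomp⟩ := hf
  have hopen : IsOpen (support f) := lc_support_isOpen hlc
  have hex : ∀ α : support f, ∃ v ∈ {B : Set G | IsCompact B ∧ IsOpen B ∧ T.IsBisection B},
      (α : G) ∈ v ∧ v ⊆ support f :=
    fun α => hample.exists_subset_of_mem_open α.2 hopen
  choose B hB1 hB2 hB3 using hex
  obtain ⟨t, ht⟩ := hcomp.elim_finite_subcover B (fun i => (hB1 i).2.1)
    (fun α hα => Set.mem_iUnion.2 ⟨⟨α, hα⟩, hB2 _⟩)
  have hsub : {α | f α ≠ 0 ∧ T.r α = x} ⊆ ⋃ i ∈ t, (B i ∩ {α | T.r α = x}) := by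
    intro α ⟨hα1, hα2⟩
    have : α ∈ ⋃ i ∈ t, B i := ht hα1
    obtain ⟨i, hi, hmem⟩ := Set.mem_iUnion₂.1 this
    exact Set.mem_iUnion₂.2 ⟨i, hi, hmem, hα2⟩
  refine Set.Finite.subset (Set.Finite.biUnion t.finite_toSet fun i _ => ?_) hsub
  obtain ⟨U, hBU, _, hrinj, _, _⟩ := (hB1 i).2.2
  refine Set.Subsingleton.finite ?_
  rintro a ⟨haB, hax⟩ b ⟨hbB, hbx⟩
  exact hrinj (hBU haB) (hBU hbB) (hax.trans hbx.symm)

variable (T) in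
/-- The convolution as a finite sum over any sufficiently large finset. -/
lemma conv_eq_sum (σ : G → G → Rˣ) (f g : G → R) (γ : G) (u : Finset (G × G))
    (hu : ∀ p : G × G, T.comp p.1 p.2 → T.mul p.1 p.2 = γ →
      ((σ p.1 p.2 : Rˣ) : R) * f p.1 * g p.2 ≠ 0 → p ∈ u) :
    conv T σ f g γ = ∑ p ∈ u, if T.comp p.1 p.2 ∧ T.mul p.1 p.2 = γ then
      ((σ p.1 p.2 : Rˣ) : R) * f p.1 * g p.2 else 0 := by
  have h1 : conv T σ f g γ = ∑ᶠ p : G × G,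
      if T.comp p.1 p.2 ∧ T.mul p.1 p.2 = γ then
        ((σ p.1 p.2 : Rˣ) : R) * f p.1 * g p.2 else 0 :=
    finsum_congr fun p => finsum_eq_if
  rw [h1]
  apply finsum_eq_sum_of_support_subset
  intro p hp
  rw [Function.mem_support] at hp
  by_cases hc : T.comp p.1 p.2 ∧ T.mul p.1 p.2 = γ
  · rw [if_pos hc] at hp
    exact hu p hc.1 hc.2 hp
  · rw [if_neg hc] at hp; exact absurd rfl hp

lemma exists_of_conv_ne_zero {σ : G → G → Rˣ} {f g : G → R} {γ : G}
    (hγ : conv T σ f g γ ≠ 0) :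
    ∃ p : G × G, T.comp p.1 p.2 ∧ T.mul p.1 p.2 = γ ∧ f p.1 ≠ 0 ∧ g p.2 ≠ 0 := by
  by_contra hc
  push_neg at hc
  apply hγ
  have h0 : ∀ p : G × G,
      (∑ᶠ _ : T.comp p.1 p.2 ∧ T.mul p.1 p.2 = γ,
        ((σ p.1 p.2 : Rˣ) : R) * f p.1 * g p.2) = 0 := by
    intro p
    rw [finsum_eq_if]
    split_ifs with h
    · by_cases hf1 : f p.1 = 0
      · rw [hf1, mul_zero, zero_mul]
      · rw [hc p h.1 h.2 hf1, mul_zero]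
    · rfl
  calc conv T σ f g γ = ∑ᶠ _p : G × G, (0 : R) := finsum_congr h0
    _ = 0 := finsum_zero

lemma pair_finite (hample : T.IsAmple) (hG : T.IsGroupoid) {f : G → R}
    (hf : f ∈ steinbergCarrier G R) (γ : G) :
    {p : G × G | T.comp p.1 p.2 ∧ T.mul p.1 p.2 = γ ∧ f p.1 ≠ 0}.Finite := by
  apply Set.Finite.of_finite_image (f := Prod.fst)
  · apply (fiber_finite hample hf (T.r γ)).subset
    rintro _ ⟨p, ⟨hc, hm, hne⟩, rfl⟩
    exact ⟨hne, by rw [← hm, hG.r_mul _ _ hc]⟩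
  · rintro p ⟨hcp, hmp, -⟩ q ⟨hcq, hmq, -⟩ hfst
    have h2 : p.2 = q.2 := by
      have := hG.eq_inv_mul hcp
      rw [hmp] at this
      have hq := hG.eq_inv_mul hcq
      rw [hmq] at hq
      rw [this, hq, hfst]
    exact Prod.ext hfst h2

lemma pair_finite₂ (hample : T.IsAmple) (hG : T.IsGroupoid) {f g : G → R}
    (hf : f ∈ steinbergCarrier G R) (hg : g ∈ steinbergCarrier G R) (x : G) :
    {p : G × G | T.comp p.1 p.2 ∧ f p.1 ≠ 0 ∧ g p.2 ≠ 0 ∧ T.r p.1 = x}.Finite := by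
  have hAf := fiber_finite hample hf x
  refine Set.Finite.subset (Set.Finite.biUnion hAf fun α _ =>
    ((fiber_finite hample hg (T.s α)).image fun β => (α, β))) ?_
  rintro p ⟨hc, hf1, hg1, hr⟩
  refine Set.mem_iUnion₂.2 ⟨p.1, ⟨hf1, hr⟩, p.2, ⟨hg1, ((hG.comp_iff _ _).1 hc).symm⟩, rfl⟩

end Aux2

section Aux3

set_option linter.unusedSectionVars false

open GroupoidStruct Function Set
open scoped Classical

variable {G : Type*} {R : Type*} [TopologicalSpace G] [CommRing R]
variable {T : GroupoidStruct G}

lemma fiber_finite_s (hample : T.IsAmple) {f : G → R}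
    (hf : f ∈ steinbergCarrier G R) (x : G) :
    {α | f α ≠ 0 ∧ T.s α = x}.Finite := by
  obtain ⟨hlc, hcomp⟩ := hf
  have hopen : IsOpen (support f) := lc_support_isOpen hlc
  have hex : ∀ α : support f, ∃ v ∈ {B : Set G | IsCompact B ∧ IsOpen B ∧ T.IsBisection B},
      (α : G) ∈ v ∧ v ⊆ support f :=
    fun α => hample.exists_subset_of_mem_open α.2 hopen
  choose B hB1 hB2 hB3 using hex
  obtain ⟨t, ht⟩ := hcomp.elim_finite_subcover B (fun i => (hB1 i).2.1)
    (fun α hα => Set.mem_iUnion.2 ⟨⟨α, hα⟩, hB2 _⟩)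
  have hsub : {α | f α ≠ 0 ∧ T.s α = x} ⊆ ⋃ i ∈ t, (B i ∩ {α | T.s α = x}) := by
    intro α ⟨hα1, hα2⟩
    obtain ⟨i, hi, hmem⟩ := Set.mem_iUnion₂.1 (ht hα1)
    exact Set.mem_iUnion₂.2 ⟨i, hi, hmem, hα2⟩
  refine Set.Finite.subset (Set.Finite.biUnion t.finite_toSet fun i _ => ?_) hsub
  obtain ⟨U, hBU, _, _, hsinj, _⟩ := (hB1 i).2.2
  refine Set.Subsingleton.finite ?_
  rintro a ⟨haB, hax⟩ b ⟨hbB, hbx⟩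
  exact hsinj (hBU haB) (hBU hbB) (hax.trans hbx.symm)

lemma pair_finite_snd (hample : T.IsAmple) (hG : T.IsGroupoid) {g : G → R}
    (hg : g ∈ steinbergCarrier G R) (γ : G) :
    {p : G × G | T.comp p.1 p.2 ∧ T.mul p.1 p.2 = γ ∧ g p.2 ≠ 0}.Finite := by
  apply Set.Finite.of_finite_image (f := Prod.snd)
  · apply (fiber_finite_s hample hg (T.s γ)).subset
    rintro _ ⟨p, ⟨hc, hm, hne⟩, rfl⟩
    exact ⟨hne, by rw [← hm, hG.s_mul _ _ hc]⟩
  · rintro p ⟨hcp, hmp, -⟩ q ⟨hcq, hmq, -⟩ hsnd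
    have h1 : p.1 = q.1 := by
      have hp' := hG.eq_mul_inv hcp
      rw [hmp] at hp'
      have hq' := hG.eq_mul_inv hcq
      rw [hmq] at hq'
      rw [hp', hq', hsnd]
    exact Prod.ext h1 hsnd

lemma carrier_zero : (0 : G → R) ∈ steinbergCarrier G R := by
  constructor
  · exact IsLocallyConstant.const 0
  · have : support (0 : G → R) = ∅ := support_zero
    rw [this]; exact isCompact_empty

lemma carrier_add {f g : G → R} (hf : f ∈ steinbergCarrier G R)
    (hg : g ∈ steinbergCarrier G R) : f + g ∈ steinbergCarrier G R := by
  have hlc : IsLocallyConstant (f + g) := hf.1.comp₂ hg.1 (· + ·)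
  refine ⟨hlc, IsCompact.of_isClosed_subset (hf.2.union hg.2)
    (lc_support_isClosed hlc) ?_⟩
  exact Function.support_add _ _

lemma carrier_smul (a : R) {f : G → R} (hf : f ∈ steinbergCarrier G R) :
    a • f ∈ steinbergCarrier G R := by
  have hlc : IsLocallyConstant (a • f) := by
    have := hf.1.comp (fun x => a * x)
    exact this
  refine ⟨hlc, IsCompact.of_isClosed_subset hf.2 (lc_support_isClosed hlc) ?_⟩
  intro x hx
  rw [Function.mem_support] at hx ⊢
  intro h0
  apply hx
  show a * f x = 0
  rw [h0, mul_zero]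

variable (T) in
lemma conv_add_left (hample : T.IsAmple) (hG : T.IsGroupoid) (σ : G → G → Rˣ)
    {f₁ f₂ g : G → R} (hf₁ : f₁ ∈ steinbergCarrier G R)
    (hf₂ : f₂ ∈ steinbergCarrier G R) (γ : G) :
    conv T σ (f₁ + f₂) g γ = conv T σ f₁ g γ + conv T σ f₂ g γ := by
  set u := (pair_finite hample hG hf₁ γ).toFinset ∪
    (pair_finite hample hG hf₂ γ).toFinset with hu_def
  have hmem : ∀ p : G × G, T.comp p.1 p.2 → T.mul p.1 p.2 = γ →
      (f₁ p.1 ≠ 0 ∨ f₂ p.1 ≠ 0) → p ∈ u := by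
    intro p hc hm h
    rcases h with h | h
    · exact Finset.mem_union_left _ ((pair_finite hample hG hf₁ γ).mem_toFinset.2 ⟨hc, hm, h⟩)
    · exact Finset.mem_union_right _ ((pair_finite hample hG hf₂ γ).mem_toFinset.2 ⟨hc, hm, h⟩)
  rw [conv_eq_sum T σ (f₁ + f₂) g γ u (fun p hc hm hne => by
      refine hmem p hc hm ?_
      by_contra hcon
      push_neg at hcon
      apply hne
      show ((σ p.1 p.2 : Rˣ) : R) * ((f₁ + f₂) p.1) * g p.2 = 0
      have : (f₁ + f₂) p.1 = 0 := by
        show f₁ p.1 + f₂ p.1 = 0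
        rw [hcon.1, hcon.2, add_zero]
      rw [this, mul_zero, zero_mul]),
    conv_eq_sum T σ f₁ g γ u (fun p hc hm hne =>
      hmem p hc hm (Or.inl fun h0 => hne (by rw [h0, mul_zero, zero_mul]))),
    conv_eq_sum T σ f₂ g γ u (fun p hc hm hne =>
      hmem p hc hm (Or.inr fun h0 => hne (by rw [h0, mul_zero, zero_mul]))),
    ← Finset.sum_add_distrib]
  refine Finset.sum_congr rfl fun p _ => ?_
  split_ifs with h
  · show ((σ p.1 p.2 : Rˣ) : R) * (f₁ p.1 + f₂ p.1) * g p.2 = _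
    ring
  · rw [add_zero]

variable (T) in
lemma conv_add_right (hample : T.IsAmple) (hG : T.IsGroupoid) (σ : G → G → Rˣ)
    {f g₁ g₂ : G → R} (hg₁ : g₁ ∈ steinbergCarrier G R)
    (hg₂ : g₂ ∈ steinbergCarrier G R) (γ : G) :
    conv T σ f (g₁ + g₂) γ = conv T σ f g₁ γ + conv T σ f g₂ γ := by
  set u := (pair_finite_snd hample hG hg₁ γ).toFinset ∪
    (pair_finite_snd hample hG hg₂ γ).toFinset with hu_def
  have hmem : ∀ p : G × G, T.comp p.1 p.2 → T.mul p.1 p.2 = γ →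
      (g₁ p.2 ≠ 0 ∨ g₂ p.2 ≠ 0) → p ∈ u := by
    intro p hc hm h
    rcases h with h | h
    · exact Finset.mem_union_left _
        ((pair_finite_snd hample hG hg₁ γ).mem_toFinset.2 ⟨hc, hm, h⟩)
    · exact Finset.mem_union_right _
        ((pair_finite_snd hample hG hg₂ γ).mem_toFinset.2 ⟨hc, hm, h⟩)
  rw [conv_eq_sum T σ f (g₁ + g₂) γ u (fun p hc hm hne => by
      refine hmem p hc hm ?_
      by_contra hcon
      push_neg at hcon
      apply hne
      show ((σ p.1 p.2 : Rˣ) : R) * f p.1 * ((g₁ + g₂) p.2) = 0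
      have : (g₁ + g₂) p.2 = 0 := by
        show g₁ p.2 + g₂ p.2 = 0
        rw [hcon.1, hcon.2, add_zero]
      rw [this, mul_zero]),
    conv_eq_sum T σ f g₁ γ u (fun p hc hm hne =>
      hmem p hc hm (Or.inl fun h0 => hne (by rw [h0, mul_zero]))),
    conv_eq_sum T σ f g₂ γ u (fun p hc hm hne =>
      hmem p hc hm (Or.inr fun h0 => hne (by rw [h0, mul_zero]))),
    ← Finset.sum_add_distrib]
  refine Finset.sum_congr rfl fun p _ => ?_
  split_ifs with h
  · show ((σ p.1 p.2 : Rˣ) : R) * f p.1 * (g₁ p.2 + g₂ p.2) = _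
    ring
  · rw [add_zero]

variable (T) in
lemma conv_smul_left (hample : T.IsAmple) (hG : T.IsGroupoid) (σ : G → G → Rˣ)
    (a : R) {f g : G → R} (hf : f ∈ steinbergCarrier G R) (γ : G) :
    conv T σ (a • f) g γ = a * conv T σ f g γ := by
  set u := (pair_finite hample hG hf γ).toFinset with hu_def
  have hmem : ∀ p : G × G, T.comp p.1 p.2 → T.mul p.1 p.2 = γ → f p.1 ≠ 0 → p ∈ u :=
    fun p hc hm h => (pair_finite hample hG hf γ).mem_toFinset.2 ⟨hc, hm, h⟩
  rw [conv_eq_sum T σ (a • f) g γ u (fun p hc hm hne => hmem p hc hm (by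
      intro h0
      apply hne
      show ((σ p.1 p.2 : Rˣ) : R) * ((a • f) p.1) * g p.2 = 0
      have : (a • f) p.1 = 0 := by show a * f p.1 = 0; rw [h0, mul_zero]
      rw [this, mul_zero, zero_mul])),
    conv_eq_sum T σ f g γ u (fun p hc hm hne =>
      hmem p hc hm (fun h0 => hne (by rw [h0, mul_zero, zero_mul]))),
    Finset.mul_sum]
  refine Finset.sum_congr rfl fun p _ => ?_
  split_ifs with h
  · show ((σ p.1 p.2 : Rˣ) : R) * (a * f p.1) * g p.2 = _
    ring
  · rw [mul_zero]

variable (T) in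
lemma conv_smul_right (hample : T.IsAmple) (hG : T.IsGroupoid) (σ : G → G → Rˣ)
    (a : R) {f g : G → R} (hg : g ∈ steinbergCarrier G R) (γ : G) :
    conv T σ f (a • g) γ = a * conv T σ f g γ := by
  set u := (pair_finite_snd hample hG hg γ).toFinset with hu_def
  have hmem : ∀ p : G × G, T.comp p.1 p.2 → T.mul p.1 p.2 = γ → g p.2 ≠ 0 → p ∈ u :=
    fun p hc hm h => (pair_finite_snd hample hG hg γ).mem_toFinset.2 ⟨hc, hm, h⟩
  rw [conv_eq_sum T σ f (a • g) γ u (fun p hc hm hne => hmem p hc hm (by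
      intro h0
      apply hne
      show ((σ p.1 p.2 : Rˣ) : R) * f p.1 * ((a • g) p.2) = 0
      have : (a • g) p.2 = 0 := by show a * g p.2 = 0; rw [h0, mul_zero]
      rw [this, mul_zero])),
    conv_eq_sum T σ f g γ u (fun p hc hm hne =>
      hmem p hc hm (fun h0 => hne (by rw [h0, mul_zero]))),
    Finset.mul_sum]
  refine Finset.sum_congr rfl fun p _ => ?_
  split_ifs with h
  · show ((σ p.1 p.2 : Rˣ) : R) * f p.1 * (a * g p.2) = _
    ring
  · rw [mul_zero]

end Aux3

section Aux4

set_option linter.unusedSectionVars false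

open GroupoidStruct Function Set
open scoped Classical

variable {G : Type*} {R : Type*} [TopologicalSpace G] [T2Space G] [CommRing R]
  [TopologicalSpace R] [DiscreteTopology R]
variable {T : GroupoidStruct G}

/-- Convolution of basic functions: `B` a compact open bisection, `D` compact
open. -/
lemma conv_basic (hT : T.IsTopGroupoid) (σ : G → G → Rˣ) (hσ : IsCocycle (R := R) T σ)
    {B D : Set G} (hBc : IsCompact B) (hBo : IsOpen B) (hBbi : T.IsBisection B)
    (hDc : IsCompact D) (hDo : IsOpen D) (a b : R) :
    conv T σ (Set.indicator B fun _ => a) (Set.indicator D fun _ => b)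
      ∈ steinbergCarrier G R := by
  have hG := hT.toIsGroupoid
  obtain ⟨U, hBU, hUo, hrinj, hsinj, himg⟩ := hBbi
  set O : Set G := T.r ⁻¹' (T.r '' B) with hO_def
  have hOo : IsOpen O := (contR hT).isOpen_preimage _ (himg B hBU hBo).1
  set A : G → G := fun γ => if h : ∃ x, x ∈ B ∧ T.r x = T.r γ then h.choose else γ
    with hA_def
  have hA : ∀ γ ∈ O, A γ ∈ B ∧ T.r (A γ) = T.r γ := by
    intro γ hγ
    obtain ⟨x, hxB, hxr⟩ := hγ
    have hex : ∃ x, x ∈ B ∧ T.r x = T.r γ := ⟨x, hxB, hxr⟩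
    simp only [hA_def, dif_pos hex]
    exact hex.choose_spec
  have hAuniq : ∀ γ ∈ O, ∀ x ∈ B, T.r x = T.r γ → A γ = x := by
    intro γ hγ x hxB hxr
    exact hrinj (hBU (hA γ hγ).1) (hBU hxB) (((hA γ hγ).2).trans hxr.symm)
  set bm : G → G := fun γ => T.mul (T.inv (A γ)) γ with hbm_def
  have hcompA : ∀ γ ∈ O, T.comp (T.inv (A γ)) γ := by
    intro γ hγ
    rw [hG.comp_iff, hG.s_inv, (hA γ hγ).2]
  have hcompAb : ∀ γ ∈ O, T.comp (A γ) (bm γ) := by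
    intro γ hγ
    rw [hG.comp_iff, hG.r_mul _ _ (hcompA γ hγ), hG.r_inv]
  have hmulAb : ∀ γ ∈ O, T.mul (A γ) (bm γ) = γ := by
    intro γ hγ
    rw [hbm_def, ← hG.assoc _ _ _ (hG.comp_inv_right (A γ)) (hcompA γ hγ)]
    show T.mul (T.mul (A γ) (T.inv (A γ))) γ = γ
    rw [T.mul_inv_self, (hA γ hγ).2, hG.r_mul_self]
  set J : Set G := (fun p : G × G => T.mul p.1 p.2) '' ((B ×ˢ D) ∩ {p | T.comp p.1 p.2})
    with hJ_def
  have hJc : IsCompact J := by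
    refine IsCompact.image_of_continuousOn ((hBc.prod hDc).inter_right
      (isClosed_compSet hT)) (hT.continuousOn_mul.mono ?_)
    exact Set.inter_subset_right
  -- characterization of J
  have hJchar : ∀ γ, γ ∈ J ↔ γ ∈ O ∧ bm γ ∈ D := by
    intro γ
    constructor
    · rintro ⟨p, ⟨⟨hpB, hpD⟩, hpc⟩, rfl⟩
      have hγO : T.mul p.1 p.2 ∈ O := ⟨p.1, hpB, (hG.r_mul _ _ hpc).symm⟩
      have hA1 : A (T.mul p.1 p.2) = p.1 :=
        hAuniq _ hγO p.1 hpB (hG.r_mul _ _ hpc).symm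
      refine ⟨hγO, ?_⟩
      rw [hbm_def]
      show T.mul (T.inv (A (T.mul p.1 p.2))) (T.mul p.1 p.2) ∈ D
      rw [hA1, ← hG.eq_inv_mul hpc]
      exact hpD
    · rintro ⟨hγO, hbD⟩
      exact ⟨(A γ, bm γ), ⟨⟨(hA γ hγO).1, hbD⟩, hcompAb γ hγO⟩, hmulAb γ hγO⟩
  -- continuity of the selections
  have hAcont : ContinuousOn A O := by
    rw [continuousOn_open_iff hOo]
    intro t ht
    have heq : O ∩ A ⁻¹' t = O ∩ T.r ⁻¹' (T.r '' (t ∩ B)) := by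
      ext γ
      constructor
      · rintro ⟨hγO, hγt⟩
        exact ⟨hγO, ⟨A γ, ⟨hγt, (hA γ hγO).1⟩, (hA γ hγO).2⟩⟩
      · rintro ⟨hγO, v, ⟨hvt, hvB⟩, hvr⟩
        exact ⟨hγO, by rw [Set.mem_preimage, hAuniq γ hγO v hvB hvr]; exact hvt⟩
    rw [heq]
    exact hOo.inter ((contR hT).isOpen_preimage _
      (himg (t ∩ B) (Set.inter_subset_right.trans hBU) (ht.inter hBo)).1)
  have hbmcont : ContinuousOn bm O := by
    have hpair : ContinuousOn (fun γ => (T.inv (A γ), γ)) O :=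
      (hT.continuous_inv.comp_continuousOn hAcont).prodMk continuousOn_id
    exact hT.continuousOn_mul.comp hpair (fun γ hγ => hcompA γ hγ)
  have hJo : IsOpen J := by
    have : J = O ∩ bm ⁻¹' D := Set.ext fun γ => (hJchar γ)
    rw [this]
    exact hbmcont.isOpen_inter_preimage hOo hDo
  -- the value function
  set F : G → R := J.indicator (fun γ => ((σ (A γ) (bm γ) : Rˣ) : R) * a * b)
    with hF_def
  have hconvF : conv T σ (Set.indicator B fun _ => a) (Set.indicator D fun _ => b) = F := by
    funext γ
    by_cases hγ : γ ∈ J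
    · obtain ⟨hγO, hbD⟩ := (hJchar γ).1 hγ
      have huniqp : ∀ p : G × G, T.comp p.1 p.2 → T.mul p.1 p.2 = γ →
          ((σ p.1 p.2 : Rˣ) : R) * (Set.indicator B (fun _ => a) p.1) *
            (Set.indicator D (fun _ => b) p.2) ≠ 0 → p = (A γ, bm γ) := by
        intro p hc hm hne
        have hp1B : p.1 ∈ B := by
          by_contra hcon
          apply hne
          rw [Set.indicator_of_notMem hcon, mul_zero, zero_mul]
        have hp1 : p.1 = A γ :=
          (hAuniq γ hγO p.1 hp1B (by rw [← hm, hG.r_mul _ _ hc])).symm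
        have hp2 : p.2 = bm γ := by
          have := hG.eq_inv_mul hc
          rw [hm, hp1] at this
          exact this
        exact Prod.ext hp1 hp2
      rw [conv_eq_sum T σ _ _ γ {(A γ, bm γ)}
        (fun p hc hm hne => Finset.mem_singleton.2 (huniqp p hc hm hne))]
      rw [Finset.sum_singleton, if_pos ⟨hcompAb γ hγO, hmulAb γ hγO⟩]
      rw [Set.indicator_of_mem (hA γ hγO).1, Set.indicator_of_mem hbD,
        hF_def, Set.indicator_of_mem hγ]
    · rw [conv_eq_sum T σ _ _ γ ∅ (fun p hc hm hne => ?_), Finset.sum_empty,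
        hF_def, Set.indicator_of_notMem hγ]
      exfalso
      have hp1B : p.1 ∈ B := by
        by_contra hcon
        apply hne
        rw [Set.indicator_of_notMem hcon, mul_zero, zero_mul]
      have hp2D : p.2 ∈ D := by
        by_contra hcon
        apply hne
        rw [Set.indicator_of_notMem hcon, mul_zero]
      exact hγ ⟨p, ⟨⟨hp1B, hp2D⟩, hc⟩, hm⟩
  rw [hconvF]
  -- F is locally constant with compact support
  have hσcont : ContinuousOn (fun γ => ((σ (A γ) (bm γ) : Rˣ) : R)) J := by
    have hpair : ContinuousOn (fun γ => (A γ, bm γ)) J :=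
      ((hAcont.mono (fun γ hγ => ((hJchar γ).1 hγ).1)).prodMk
        (hbmcont.mono (fun γ hγ => ((hJchar γ).1 hγ).1)))
    exact hσ.continuousOn.comp hpair
      (fun γ hγ => hcompAb γ ((hJchar γ).1 hγ).1)
  have hlc : IsLocallyConstant F := by
    rw [IsLocallyConstant.iff_exists_open]
    intro x
    by_cases hx : x ∈ J
    · have hca : ContinuousAt (fun γ => ((σ (A γ) (bm γ) : Rˣ) : R)) x :=
        (hσcont x hx).continuousAt (hJo.mem_nhds hx)
      have hnb : (fun γ => ((σ (A γ) (bm γ) : Rˣ) : R)) ⁻¹'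
          {((σ (A x) (bm x) : Rˣ) : R)} ∈ nhds x := hca.preimage_mem_nhds ((isOpen_discrete _).mem_nhds rfl)
      obtain ⟨V, hVsub, hVo, hxV⟩ := mem_nhds_iff.1 hnb
      refine ⟨V ∩ J, hVo.inter hJo, ⟨hxV, hx⟩, ?_⟩
      rintro y ⟨hyV, hyJ⟩
      rw [hF_def, Set.indicator_of_mem hyJ, Set.indicator_of_mem hx]
      have : ((σ (A y) (bm y) : Rˣ) : R) = ((σ (A x) (bm x) : Rˣ) : R) := hVsub hyV
      rw [this]
    · refine ⟨Jᶜ, hJc.isClosed.isOpen_compl, hx, fun y hy => ?_⟩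
      rw [hF_def, Set.indicator_of_notMem hy, Set.indicator_of_notMem hx]
  refine ⟨hlc, IsCompact.of_isClosed_subset hJc (lc_support_isClosed hlc) ?_⟩
  exact Set.support_indicator_subset

end Aux4

section Aux5

set_option linter.unusedSectionVars false

open GroupoidStruct Function Set
open scoped Classical

variable {G : Type*} {R : Type*} [TopologicalSpace G] [T2Space G] [CommRing R]
  [TopologicalSpace R] [DiscreteTopology R]
variable {T : GroupoidStruct G}

lemma isBisection_subset {B C : Set G} (hB : T.IsBisection B) (hCB : C ⊆ B) :
    T.IsBisection C := by
  obtain ⟨U, h1, h2, h3, h4, h5⟩ := hB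
  exact ⟨U, hCB.trans h1, h2, h3, h4, h5⟩

lemma carrier_sum {ι : Type*} (t : Finset ι) (F : ι → G → R)
    (h : ∀ i ∈ t, F i ∈ steinbergCarrier G R) :
    (∑ i ∈ t, F i) ∈ steinbergCarrier G R := by
  classical
  induction t using Finset.cons_induction with
  | empty => simpa using carrier_zero
  | cons i t hit IH =>
    rw [Finset.sum_cons]
    exact carrier_add (h i (Finset.mem_cons_self i t))
      (IH fun j hj => h j (Finset.mem_cons_of_mem hj))

variable (T) in
lemma conv_zero_left (σ : G → G → Rˣ) (g : G → R) : conv T σ (0 : G → R) g = 0 := by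
  funext γ
  rw [conv_eq_sum T σ 0 g γ ∅ (fun p hc hm hne => absurd (show
      ((σ p.1 p.2 : Rˣ) : R) * (0 : G → R) p.1 * g p.2 = 0 by
        show ((σ p.1 p.2 : Rˣ) : R) * (0 : R) * g p.2 = 0
        rw [mul_zero, zero_mul]) hne), Finset.sum_empty]
  rfl

variable (T) in
lemma conv_zero_right (σ : G → G → Rˣ) (f : G → R) : conv T σ f (0 : G → R) = 0 := by
  funext γ
  rw [conv_eq_sum T σ f 0 γ ∅ (fun p hc hm hne => absurd (show
      ((σ p.1 p.2 : Rˣ) : R) * f p.1 * (0 : G → R) p.2 = 0 by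
        show ((σ p.1 p.2 : Rˣ) : R) * f p.1 * (0 : R) = 0
        rw [mul_zero]) hne), Finset.sum_empty]
  rfl

variable (T) in
lemma conv_finsum_left (hample : T.IsAmple) (hG : T.IsGroupoid) (σ : G → G → Rˣ)
    {ι : Type*} (t : Finset ι) (F : ι → G → R)
    (hF : ∀ i ∈ t, F i ∈ steinbergCarrier G R) {g : G → R}
    (hg : g ∈ steinbergCarrier G R) :
    conv T σ (∑ i ∈ t, F i) g = ∑ i ∈ t, conv T σ (F i) g := by
  classical
  induction t using Finset.cons_induction with
  | empty => simpa using conv_zero_left T σ g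
  | cons i t hit IH =>
    rw [Finset.sum_cons, Finset.sum_cons, ← IH fun j hj => hF j (Finset.mem_cons_of_mem hj)]
    funext γ
    exact conv_add_left T hample hG σ (hF i (Finset.mem_cons_self i t))
      (carrier_sum t F fun j hj => hF j (Finset.mem_cons_of_mem hj)) γ

variable (T) in
lemma conv_finsum_right (hample : T.IsAmple) (hG : T.IsGroupoid) (σ : G → G → Rˣ)
    {ι : Type*} (t : Finset ι) (F : ι → G → R)
    (hF : ∀ i ∈ t, F i ∈ steinbergCarrier G R) {f : G → R}
    (hf : f ∈ steinbergCarrier G R) :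
    conv T σ f (∑ i ∈ t, F i) = ∑ i ∈ t, conv T σ f (F i) := by
  classical
  induction t using Finset.cons_induction with
  | empty => simpa using conv_zero_right T σ f
  | cons i t hit IH =>
    rw [Finset.sum_cons, Finset.sum_cons, ← IH fun j hj => hF j (Finset.mem_cons_of_mem hj)]
    funext γ
    exact conv_add_right T hample hG σ (hF i (Finset.mem_cons_self i t))
      (carrier_sum t F fun j hj => hF j (Finset.mem_cons_of_mem hj)) γ

lemma indicator_carrier {A : Set G} (hAc : IsCompact A) (hAo : IsOpen A) (a : R) :
    (Set.indicator A fun _ => a) ∈ steinbergCarrier G R := by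
  have hAclosed : IsClosed A := hAc.isClosed
  have hlc : IsLocallyConstant (Set.indicator A fun _ => a : G → R) := by
    rw [IsLocallyConstant.iff_exists_open]
    intro x
    by_cases hx : x ∈ A
    · exact ⟨A, hAo, hx, fun y hy => by
        rw [Set.indicator_of_mem hy, Set.indicator_of_mem hx]⟩
    · exact ⟨Aᶜ, hAclosed.isOpen_compl, hx, fun y hy => by
        rw [Set.indicator_of_notMem hy, Set.indicator_of_notMem hx]⟩
  exact ⟨hlc, IsCompact.of_isClosed_subset hAc (lc_support_isClosed hlc)
    Set.support_indicator_subset⟩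

/-- Stage 1: decomposition of a carrier element into indicator functions of
its compact open level sets. -/
lemma carrier_decomp {f : G → R} (hf : f ∈ steinbergCarrier G R) :
    ∃ V : Finset R, (0 : R) ∉ V ∧
      (∀ c ∈ V, IsCompact (f ⁻¹' {c}) ∧ IsOpen (f ⁻¹' {c})) ∧
      f = ∑ c ∈ V, Set.indicator (f ⁻¹' {c}) (fun _ => c) := by
  have hcont : Continuous f := hf.1.continuous
  have himg : (f '' support f).Finite := (hf.2.image hcont).finite ⟨inferInstance⟩
  refine ⟨himg.toFinset.erase 0, Finset.notMem_erase _ _, ?_, ?_⟩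
  · intro c hc
    have hco : IsOpen (f ⁻¹' {c}) := hf.1 _
    have hcc : IsClosed (f ⁻¹' {c}) := by
      rw [← isOpen_compl_iff, ← Set.preimage_compl]
      exact hf.1 _
    have hcne : c ≠ 0 := (Finset.mem_erase.1 hc).1
    have hsub : f ⁻¹' {c} ⊆ support f := by
      intro x hx
      rw [Function.mem_support, Set.mem_preimage, Set.mem_singleton_iff] at *
      rw [hx]; exact hcne
    exact ⟨IsCompact.of_isClosed_subset hf.2 hcc hsub, hco⟩
  · funext x
    rw [Finset.sum_apply]
    have heach : ∀ c ∈ himg.toFinset.erase 0,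
        Set.indicator (f ⁻¹' {c}) (fun _ => c) x = if f x = c then c else 0 := by
      intro c _
      by_cases hx : f x = c
      · rw [Set.indicator_of_mem (by exact hx), if_pos hx]
      · rw [Set.indicator_of_notMem (by exact hx), if_neg hx]
    rw [Finset.sum_congr rfl heach]
    rw [show (∑ c ∈ himg.toFinset.erase 0, if f x = c then c else 0) =
      ∑ c ∈ himg.toFinset.erase 0, if f x = c then id c else 0 from rfl,
      Finset.sum_ite_eq (himg.toFinset.erase 0) (f x) id]
    by_cases hfx : f x = 0
    · rw [if_neg (by rw [hfx]; exact Finset.notMem_erase _ _), hfx]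
    · rw [if_pos (Finset.mem_erase.2 ⟨hfx, himg.mem_toFinset.2 ⟨x, hfx, rfl⟩⟩)]
      rfl

/-- Stage 2: disjointification of a compact open set along a finite cover by
compact open bisections. -/
lemma indicator_decomp (T : GroupoidStruct G) {ι : Type*} (t : Finset ι) :
    ∀ (Bf : ι → Set G) (A : Set G), IsCompact A → IsOpen A →
      A ⊆ (⋃ i ∈ t, Bf i) →
      (∀ i ∈ t, IsCompact (Bf i) ∧ IsOpen (Bf i) ∧ T.IsBisection (Bf i)) →
      ∀ c : R, ∃ (n : ℕ) (Bs : Fin n → Set G),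
        (∀ k, IsCompact (Bs k) ∧ IsOpen (Bs k) ∧ T.IsBisection (Bs k)) ∧
        Set.indicator A (fun _ => c) =
          ∑ k : Fin n, Set.indicator (Bs k) (fun _ => c) := by
  classical
  induction t using Finset.cons_induction with
  | empty =>
    intro Bf A hAc hAo hcover hprops c
    have hA : A = ∅ := by
      rw [Set.eq_empty_iff_forall_notMem]
      intro x hx
      simpa using hcover hx
    refine ⟨0, fun k => k.elim0, fun k => k.elim0, ?_⟩
    rw [hA]
    simp only [Set.indicator_empty, Finset.univ_eq_empty, Finset.sum_empty]
    rfl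
  | cons i t hit IH =>
    intro Bf A hAc hAo hcover hprops c
    obtain ⟨hBic, hBio, hBibi⟩ := hprops i (Finset.mem_cons_self i t)
    have hAclosed : IsClosed A := hAc.isClosed
    set A1 := A ∩ Bf i with hA1_def
    set A2 := A \ Bf i with hA2_def
    have hA1c : IsCompact A1 :=
      IsCompact.of_isClosed_subset hAc (hAclosed.inter hBic.isClosed)
        Set.inter_subset_left
    have hA2o : IsOpen A2 := hAo.inter hBic.isClosed.isOpen_compl
    have hA2c : IsCompact A2 :=
      IsCompact.of_isClosed_subset hAc (hAclosed.inter hBio.isClosed_compl)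
        Set.diff_subset
    have hA2cov : A2 ⊆ ⋃ j ∈ t, Bf j := by
      rintro x ⟨hxA, hxB⟩
      have := hcover hxA
      rw [Set.mem_iUnion₂] at this ⊢
      obtain ⟨j, hj, hxj⟩ := this
      rcases Finset.mem_cons.1 hj with rfl | hj'
      · exact absurd hxj hxB
      · exact ⟨j, hj', hxj⟩
    obtain ⟨n, Bs, hBs, heq⟩ := IH Bf A2 hA2c hA2o hA2cov
      (fun j hj => hprops j (Finset.mem_cons_of_mem hj)) c
    refine ⟨n + 1, Fin.cons A1 Bs, ?_, ?_⟩
    · intro k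
      refine Fin.cases ?_ (fun k' => ?_) k
      · exact ⟨hA1c, hAo.inter hBio, isBisection_subset hBibi Set.inter_subset_right⟩
      · exact hBs k'
    · rw [Fin.sum_univ_succ]
      simp only [Fin.cons_zero, Fin.cons_succ]
      rw [← heq]
      funext x
      show Set.indicator A (fun _ => c) x =
        Set.indicator A1 (fun _ => c) x + Set.indicator A2 (fun _ => c) x
      by_cases hxA : x ∈ A
      · by_cases hxB : x ∈ Bf i
        · rw [Set.indicator_of_mem hxA, Set.indicator_of_mem (show x ∈ A1 from Set.mem_inter hxA hxB),
            Set.indicator_of_notMem (show x ∉ A2 from fun h => h.2 hxB), add_zero]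
        · rw [Set.indicator_of_mem hxA,
            Set.indicator_of_notMem (show x ∉ A1 from fun h => hxB h.2),
            Set.indicator_of_mem (show x ∈ A2 from ⟨hxA, hxB⟩), zero_add]
      · rw [Set.indicator_of_notMem hxA,
          Set.indicator_of_notMem (show x ∉ A1 from fun h => hxA h.1),
          Set.indicator_of_notMem (show x ∉ A2 from fun h => hxA h.1), add_zero]

/-- A compact open set in an ample groupoid decomposes into indicators of
compact open bisections. -/
lemma indicator_bisection_decomp (hample : T.IsAmple) {A : Set G}
    (hAc : IsCompact A) (hAo : IsOpen A) (c : R) :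
    ∃ (n : ℕ) (Bs : Fin n → Set G),
      (∀ k, IsCompact (Bs k) ∧ IsOpen (Bs k) ∧ T.IsBisection (Bs k)) ∧
      Set.indicator A (fun _ => c) =
        ∑ k : Fin n, Set.indicator (Bs k) (fun _ => c) := by
  have hex : ∀ α : A, ∃ v ∈ {B : Set G | IsCompact B ∧ IsOpen B ∧ T.IsBisection B},
      (α : G) ∈ v ∧ v ⊆ A := fun α => hample.exists_subset_of_mem_open α.2 hAo
  choose B hB1 hB2 hB3 using hex
  obtain ⟨t, ht⟩ := hAc.elim_finite_subcover B (fun i => (hB1 i).2.1)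
    (fun α hα => Set.mem_iUnion.2 ⟨⟨α, hα⟩, hB2 _⟩)
  exact indicator_decomp T t B A hAc hAo ht (fun i _ => hB1 i) c

/-- Closure of the twisted Steinberg algebra under convolution. -/
lemma conv_carrier (hample : T.IsAmple) (hT : T.IsTopGroupoid)
    (σ : G → G → Rˣ) (hσ : IsCocycle (R := R) T σ) {f g : G → R}
    (hf : f ∈ steinbergCarrier G R) (hg : g ∈ steinbergCarrier G R) :
    conv T σ f g ∈ steinbergCarrier G R := by
  have hG := hT.toIsGroupoid
  obtain ⟨Vf, hVf0, hVfprop, hfeq⟩ := carrier_decomp hf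
  obtain ⟨Vg, hVg0, hVgprop, hgeq⟩ := carrier_decomp hg
  have hfiber_f : ∀ c ∈ Vf, (Set.indicator (f ⁻¹' {c}) (fun _ => c) : G → R)
      ∈ steinbergCarrier G R :=
    fun c hc => indicator_carrier (hVfprop c hc).1 (hVfprop c hc).2 c
  have hfiber_g : ∀ d ∈ Vg, (Set.indicator (g ⁻¹' {d}) (fun _ => d) : G → R)
      ∈ steinbergCarrier G R :=
    fun d hd => indicator_carrier (hVgprop d hd).1 (hVgprop d hd).2 d
  rw [hfeq, conv_finsum_left T hample hG σ Vf _ hfiber_f hg]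
  refine carrier_sum _ _ fun c hc => ?_
  rw [hgeq, conv_finsum_right T hample hG σ Vg _ hfiber_g (hfiber_f c hc)]
  refine carrier_sum _ _ fun d hd => ?_
  obtain ⟨n, Bs, hBs, heq⟩ :=
    indicator_bisection_decomp hample (hVfprop c hc).1 (hVfprop c hc).2 c
  rw [heq, conv_finsum_left T hample hG σ Finset.univ _
    (fun k _ => indicator_carrier (hBs k).1 (hBs k).2.1 c)
    (hfiber_g d hd)]
  refine carrier_sum _ _ fun k _ => ?_
  exact conv_basic hT σ hσ (hBs k).1 (hBs k).2.1 (hBs k).2.2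
    (hVgprop d hd).1 (hVgprop d hd).2 c d

end Aux5

section Aux6

set_option linter.unusedSectionVars false

open GroupoidStruct Function Set
open scoped Classical

variable {G : Type*} {R : Type*} [TopologicalSpace G] [T2Space G] [CommRing R]
  [TopologicalSpace R] [DiscreteTopology R]
variable {T : GroupoidStruct G}

lemma conv_assoc (hample : T.IsAmple) (hT : T.IsTopGroupoid)
    (σ : G → G → Rˣ) (hσ : IsCocycle (R := R) T σ) {f g h : G → R}
    (hf : f ∈ steinbergCarrier G R) (hg : g ∈ steinbergCarrier G R)
    (hh : h ∈ steinbergCarrier G R) (γ : G) :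
    conv T σ (conv T σ f g) h γ = conv T σ f (conv T σ g h) γ := by
  have hG := hT.toIsGroupoid
  have hSPfin : {p : G × G | T.comp p.1 p.2 ∧ T.mul p.1 p.2 = γ ∧ h p.2 ≠ 0 ∧
      ∃ q : G × G, T.comp q.1 q.2 ∧ T.mul q.1 q.2 = p.1 ∧ f q.1 ≠ 0 ∧ g q.2 ≠ 0}.Finite :=
    (pair_finite_snd hample hG hh γ).subset (fun p hp => ⟨hp.1, hp.2.1, hp.2.2.1⟩)
  have hSP'fin : {p : G × G | T.comp p.1 p.2 ∧ T.mul p.1 p.2 = γ ∧ f p.1 ≠ 0 ∧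
      ∃ q : G × G, T.comp q.1 q.2 ∧ T.mul q.1 q.2 = p.2 ∧ g q.1 ≠ 0 ∧ h q.2 ≠ 0}.Finite :=
    (pair_finite hample hG hf γ).subset (fun p hp => ⟨hp.1, hp.2.1, hp.2.2.1⟩)
  have hQfin : {q : G × G | T.comp q.1 q.2 ∧ f q.1 ≠ 0 ∧ g q.2 ≠ 0 ∧
      T.r q.1 = T.r γ}.Finite := pair_finite₂ hample hG hf hg (T.r γ)
  have hQ'fin : {q : G × G | T.comp q.1 q.2 ∧ g q.1 ≠ 0 ∧ h q.2 ≠ 0 ∧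
      ∃ α, f α ≠ 0 ∧ T.r α = T.r γ ∧ T.r q.1 = T.s α}.Finite := by
    refine Set.Finite.subset (Set.Finite.biUnion (fiber_finite hample hf (T.r γ))
      (fun α _ => pair_finite₂ hample hG hg hh (T.s α))) ?_
    rintro q ⟨hc, hg1, hh1, α, hα1, hα2, hα3⟩
    exact Set.mem_iUnion₂.2 ⟨α, ⟨hα1, hα2⟩, hc, hg1, hh1, hα3⟩
  -- LHS as a double sum over pairs of pairs
  have hL2 : conv T σ (conv T σ f g) h γ = ∑ x ∈ hSPfin.toFinset ×ˢ hQfin.toFinset,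
      if ((T.comp x.1.1 x.1.2 ∧ T.mul x.1.1 x.1.2 = γ) ∧
          (T.comp x.2.1 x.2.2 ∧ T.mul x.2.1 x.2.2 = x.1.1)) then
        ((σ x.1.1 x.1.2 : Rˣ) : R) * ((σ x.2.1 x.2.2 : Rˣ) : R) *
          f x.2.1 * g x.2.2 * h x.1.2 else 0 := by
    have hL1 : conv T σ (conv T σ f g) h γ = ∑ p ∈ hSPfin.toFinset,
        if T.comp p.1 p.2 ∧ T.mul p.1 p.2 = γ then
          ((σ p.1 p.2 : Rˣ) : R) * conv T σ f g p.1 * h p.2 else 0 := by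
      refine conv_eq_sum T σ _ _ γ _ ?_
      intro p hc hm hne
      have hh2 : h p.2 ≠ 0 := fun h0 => hne (by rw [h0, mul_zero])
      have hcv : conv T σ f g p.1 ≠ 0 := fun h0 => hne (by rw [h0, mul_zero, zero_mul])
      obtain ⟨q, hq1, hq2, hq3, hq4⟩ := exists_of_conv_ne_zero hcv
      exact hSPfin.mem_toFinset.2 ⟨hc, hm, hh2, q, hq1, hq2, hq3, hq4⟩
    rw [hL1, Finset.sum_product]
    refine Finset.sum_congr rfl fun p _ => ?_
    by_cases hc1 : T.comp p.1 p.2 ∧ T.mul p.1 p.2 = γ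
    · rw [if_pos hc1]
      have hrp1 : T.r p.1 = T.r γ := by rw [← hc1.2, hG.r_mul _ _ hc1.1]
      rw [conv_eq_sum T σ f g p.1 hQfin.toFinset (fun q hqc hqm hqne => by
        refine hQfin.mem_toFinset.2 ⟨hqc, ?_, ?_, ?_⟩
        · exact fun h0 => hqne (by rw [h0, mul_zero, zero_mul])
        · exact fun h0 => hqne (by rw [h0, mul_zero])
        · have hq1 : T.r q.1 = T.r p.1 := by rw [← hqm, hG.r_mul _ _ hqc]
          rw [hq1, hrp1]),
        Finset.mul_sum, Finset.sum_mul]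
      refine Finset.sum_congr rfl fun q _ => ?_
      by_cases hc2 : T.comp q.1 q.2 ∧ T.mul q.1 q.2 = p.1
      · rw [if_pos hc2, if_pos ⟨hc1, hc2⟩]
        ring
      · rw [if_neg hc2, if_neg (fun hcon => hc2 hcon.2), mul_zero, zero_mul]
    · rw [if_neg hc1,
        Finset.sum_congr rfl (fun q _ => if_neg (fun hcon => hc1 hcon.1)),
        Finset.sum_const_zero]
  -- RHS as a double sum over pairs of pairs
  have hR2 : conv T σ f (conv T σ g h) γ = ∑ x ∈ hSP'fin.toFinset ×ˢ hQ'fin.toFinset,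
      if ((T.comp x.1.1 x.1.2 ∧ T.mul x.1.1 x.1.2 = γ) ∧
          (T.comp x.2.1 x.2.2 ∧ T.mul x.2.1 x.2.2 = x.1.2)) then
        ((σ x.1.1 x.1.2 : Rˣ) : R) * ((σ x.2.1 x.2.2 : Rˣ) : R) *
          f x.1.1 * g x.2.1 * h x.2.2 else 0 := by
    have hR1 : conv T σ f (conv T σ g h) γ = ∑ p ∈ hSP'fin.toFinset,
        if T.comp p.1 p.2 ∧ T.mul p.1 p.2 = γ then
          ((σ p.1 p.2 : Rˣ) : R) * f p.1 * conv T σ g h p.2 else 0 := by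
      refine conv_eq_sum T σ _ _ γ _ ?_
      intro p hc hm hne
      have hf2 : f p.1 ≠ 0 := fun h0 => hne (by rw [h0, mul_zero, zero_mul])
      have hcv : conv T σ g h p.2 ≠ 0 := fun h0 => hne (by rw [h0, mul_zero])
      obtain ⟨q, hq1, hq2, hq3, hq4⟩ := exists_of_conv_ne_zero hcv
      exact hSP'fin.mem_toFinset.2 ⟨hc, hm, hf2, q, hq1, hq2, hq3, hq4⟩
    rw [hR1, Finset.sum_product]
    refine Finset.sum_congr rfl fun p hp => ?_
    have hpmem := hSP'fin.mem_toFinset.1 hp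
    by_cases hc1 : T.comp p.1 p.2 ∧ T.mul p.1 p.2 = γ
    · rw [if_pos hc1]
      have hrp1 : T.r p.1 = T.r γ := by rw [← hc1.2, hG.r_mul _ _ hc1.1]
      rw [conv_eq_sum T σ g h p.2 hQ'fin.toFinset (fun q hqc hqm hqne => by
        refine hQ'fin.mem_toFinset.2 ⟨hqc, ?_, ?_, ⟨p.1, hpmem.2.2.1, hrp1, ?_⟩⟩
        · exact fun h0 => hqne (by rw [h0, mul_zero, zero_mul])
        · exact fun h0 => hqne (by rw [h0, mul_zero])
        · have hq1 : T.r q.1 = T.r p.2 := by rw [← hqm, hG.r_mul _ _ hqc]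
          rw [hq1, ← (hG.comp_iff _ _).1 hc1.1]),
        Finset.mul_sum]
      refine Finset.sum_congr rfl fun q _ => ?_
      by_cases hc2 : T.comp q.1 q.2 ∧ T.mul q.1 q.2 = p.2
      · rw [if_pos hc2, if_pos ⟨hc1, hc2⟩]
        ring
      · rw [if_neg hc2, if_neg (fun hcon => hc2 hcon.2), mul_zero]
    · rw [if_neg hc1,
        Finset.sum_congr rfl (fun q _ => if_neg (fun hcon => hc1 hcon.1)),
        Finset.sum_const_zero]
  rw [hL2, hR2]
  -- restrict both sums to their nonzero terms
  rw [← Finset.sum_filter_ne_zero (hSPfin.toFinset ×ˢ hQfin.toFinset),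
    ← Finset.sum_filter_ne_zero (hSP'fin.toFinset ×ˢ hQ'fin.toFinset)]
  -- the bijection
  refine Finset.sum_bij' (i := fun x _ => ((x.2.1, T.mul x.2.2 x.1.2), (x.2.2, x.1.2)))
    (j := fun x _ => ((T.mul x.1.1 x.2.1, x.2.2), (x.1.1, x.2.1))) ?_ ?_ ?_ ?_ ?_
  · -- hi : image lands in the right filtered set
    rintro ⟨p, q⟩ hx
    rw [Finset.mem_filter] at hx
    obtain ⟨hmem, hne⟩ := hx
    beta_reduce
    have hcond : ((T.comp p.1 p.2 ∧ T.mul p.1 p.2 = γ) ∧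
        (T.comp q.1 q.2 ∧ T.mul q.1 q.2 = p.1)) := by
      by_contra hcon
      rw [if_neg hcon] at hne
      exact hne rfl
    rw [if_pos hcond] at hne
    obtain ⟨⟨hcp, hmp⟩, ⟨hcq, hmq⟩⟩ := hcond
    have hfne : f q.1 ≠ 0 := fun h0 => hne (by rw [h0, mul_zero, zero_mul, zero_mul])
    have hgne : g q.2 ≠ 0 := fun h0 => hne (by rw [h0, mul_zero, zero_mul])
    have hhne : h p.2 ≠ 0 := fun h0 => hne (by rw [h0, mul_zero])
    -- composability facts
    have hcq2p2 : T.comp q.2 p.2 := by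
      rw [hG.comp_iff]
      have : T.s q.2 = T.s p.1 := by rw [← hmq, hG.s_mul _ _ hcq]
      rw [this, (hG.comp_iff _ _).1 hcp]
    have hcq1m : T.comp q.1 (T.mul q.2 p.2) := by
      rw [hG.comp_iff, hG.r_mul _ _ hcq2p2]
      exact (hG.comp_iff _ _).1 hcq
    have hmul : T.mul q.1 (T.mul q.2 p.2) = γ := by
      rw [← hG.assoc _ _ _ hcq hcq2p2, hmq, hmp]
    have hrq1 : T.r q.1 = T.r γ := by
      rw [← hmp, hG.r_mul _ _ hcp, ← hmq, hG.r_mul _ _ hcq]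
    rw [Finset.mem_filter]
    constructor
    · rw [Finset.mem_product]
      constructor
      · exact hSP'fin.mem_toFinset.2 ⟨hcq1m, hmul, hfne, (q.2, p.2), hcq2p2, rfl, hgne, hhne⟩
      · exact hQ'fin.mem_toFinset.2 ⟨hcq2p2, hgne, hhne, q.1, hfne, hrq1, ((hG.comp_iff _ _).1 hcq).symm⟩
    · rw [if_pos ⟨⟨hcq1m, hmul⟩, hcq2p2, rfl⟩]
      intro h0
      apply hne
      have hcoc := congrArg (fun u : Rˣ => (u : R)) (hσ.cocycle q.1 q.2 p.2 hcq hcq2p2)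
      simp only [Units.val_mul] at hcoc
      rw [hmq] at hcoc
      linear_combination h0 + (f q.1 * g q.2 * h p.2) * hcoc
  · -- hj : inverse lands in the left filtered set
    rintro ⟨p, q⟩ hx
    rw [Finset.mem_filter] at hx
    obtain ⟨hmem, hne⟩ := hx
    beta_reduce
    have hcond : ((T.comp p.1 p.2 ∧ T.mul p.1 p.2 = γ) ∧
        (T.comp q.1 q.2 ∧ T.mul q.1 q.2 = p.2)) := by
      by_contra hcon
      rw [if_neg hcon] at hne
      exact hne rfl
    rw [if_pos hcond] at hne
    obtain ⟨⟨hcp, hmp⟩, ⟨hcq, hmq⟩⟩ := hcond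
    have hfne : f p.1 ≠ 0 := fun h0 => hne (by rw [h0, mul_zero, zero_mul, zero_mul])
    have hgne : g q.1 ≠ 0 := fun h0 => hne (by rw [h0, mul_zero, zero_mul])
    have hhne : h q.2 ≠ 0 := fun h0 => hne (by rw [h0, mul_zero])
    have hcp1q1 : T.comp p.1 q.1 := by
      rw [hG.comp_iff, (hG.comp_iff _ _).1 hcp, ← hmq, hG.r_mul _ _ hcq]
    have hcmq2 : T.comp (T.mul p.1 q.1) q.2 := by
      rw [hG.comp_iff, hG.s_mul _ _ hcp1q1]
      exact (hG.comp_iff _ _).1 hcq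
    have hmul : T.mul (T.mul p.1 q.1) q.2 = γ := by
      rw [hG.assoc _ _ _ hcp1q1 hcq, hmq, hmp]
    rw [Finset.mem_filter]
    constructor
    · rw [Finset.mem_product]
      constructor
      · exact hSPfin.mem_toFinset.2 ⟨hcmq2, hmul, hhne, (p.1, q.1), hcp1q1, rfl, hfne, hgne⟩
      · have hrp1 : T.r p.1 = T.r γ := by rw [← hmp, hG.r_mul _ _ hcp]
        exact hQfin.mem_toFinset.2 ⟨hcp1q1, hfne, hgne, hrp1⟩
    · rw [if_pos ⟨⟨hcmq2, hmul⟩, hcp1q1, rfl⟩]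
      intro h0
      apply hne
      have hcoc := congrArg (fun u : Rˣ => (u : R)) (hσ.cocycle p.1 q.1 q.2 hcp1q1 hcq)
      simp only [Units.val_mul] at hcoc
      rw [hmq] at hcoc
      linear_combination h0 - (f p.1 * g q.1 * h q.2) * hcoc
  · -- left inverse
    rintro ⟨p, q⟩ hx
    rw [Finset.mem_filter] at hx
    obtain ⟨hmem, hne⟩ := hx
    beta_reduce
    have hcond : ((T.comp p.1 p.2 ∧ T.mul p.1 p.2 = γ) ∧
        (T.comp q.1 q.2 ∧ T.mul q.1 q.2 = p.1)) := by
      by_contra hcon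
      rw [if_neg hcon] at hne
      exact hne rfl
    show ((T.mul q.1 q.2, p.2), (q.1, q.2)) = (p, q)
    rw [hcond.2.2]
  · -- right inverse
    rintro ⟨p, q⟩ hx
    rw [Finset.mem_filter] at hx
    obtain ⟨hmem, hne⟩ := hx
    beta_reduce
    have hcond : ((T.comp p.1 p.2 ∧ T.mul p.1 p.2 = γ) ∧
        (T.comp q.1 q.2 ∧ T.mul q.1 q.2 = p.2)) := by
      by_contra hcon
      rw [if_neg hcon] at hne
      exact hne rfl
    show ((p.1, T.mul q.1 q.2), (q.1, q.2)) = (p, q)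
    rw [hcond.2.2]
  · -- values agree
    rintro ⟨p, q⟩ hx
    rw [Finset.mem_filter] at hx
    obtain ⟨hmem, hne⟩ := hx
    beta_reduce
    have hcond : ((T.comp p.1 p.2 ∧ T.mul p.1 p.2 = γ) ∧
        (T.comp q.1 q.2 ∧ T.mul q.1 q.2 = p.1)) := by
      by_contra hcon
      rw [if_neg hcon] at hne
      exact hne rfl
    obtain ⟨⟨hcp, hmp⟩, ⟨hcq, hmq⟩⟩ := hcond
    have hcq2p2 : T.comp q.2 p.2 := by
      rw [hG.comp_iff]
      have : T.s q.2 = T.s p.1 := by rw [← hmq, hG.s_mul _ _ hcq]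
      rw [this, (hG.comp_iff _ _).1 hcp]
    have hcq1m : T.comp q.1 (T.mul q.2 p.2) := by
      rw [hG.comp_iff, hG.r_mul _ _ hcq2p2]
      exact (hG.comp_iff _ _).1 hcq
    have hmul : T.mul q.1 (T.mul q.2 p.2) = γ := by
      rw [← hG.assoc _ _ _ hcq hcq2p2, hmq, hmp]
    rw [if_pos ⟨⟨hcp, hmp⟩, hcq, hmq⟩, if_pos ⟨⟨hcq1m, hmul⟩, hcq2p2, rfl⟩]
    have hcoc := congrArg (fun u : Rˣ => (u : R)) (hσ.cocycle q.1 q.2 p.2 hcq hcq2p2)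
    simp only [Units.val_mul] at hcoc
    rw [hmq] at hcoc
    linear_combination (f q.1 * g q.2 * h p.2) * hcoc

end Aux6

section Aux7

set_option linter.unusedSectionVars false

open GroupoidStruct Function Set
open scoped Classical

variable {G : Type*} {R : Type*} [TopologicalSpace G] [T2Space G] [CommRing R]
  [TopologicalSpace R] [DiscreteTopology R]
variable {T : GroupoidStruct G}

lemma tinv_zero {Tsub : Subgroup Rˣ} {c : R → R} (hc : IsTInverseInvolution Tsub c) :
    c 0 = 0 := by
  have := hc.2.1 0 0
  rw [add_zero] at this
  have h2 : c 0 + c 0 - c 0 = c 0 - c 0 := by rw [← this]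
  simpa using h2

lemma tinv_ne_zero {Tsub : Subgroup Rˣ} {c : R → R} (hc : IsTInverseInvolution Tsub c)
    {x : R} (hx : x ≠ 0) : c x ≠ 0 := by
  intro h0
  apply hx
  have := congrArg c h0
  rw [hc.2.2.2.1 x, tinv_zero hc] at this
  exact this

/-- `σ(γ,γ⁻¹) = σ(γ⁻¹,γ)`. -/
lemma sigma_symm (hG : T.IsGroupoid) {σ : G → G → Rˣ} (hσ : IsCocycle (R := R) T σ)
    (γ : G) : σ γ (T.inv γ) = σ (T.inv γ) γ := by
  have hco := hσ.cocycle γ (T.inv γ) γ (hG.comp_inv_right γ) (hG.comp_inv_left γ)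
  rw [T.mul_inv_self, T.inv_mul_self, hσ.norm_left, hσ.norm_right, mul_one, one_mul] at hco
  exact hco

/-- The key identity `σ(α,β) σ(αβ,(αβ)⁻¹) σ(β⁻¹,α⁻¹) = σ(α,α⁻¹) σ(β,β⁻¹)`. -/
lemma star_identity (hG : T.IsGroupoid) {σ : G → G → Rˣ} (hσ : IsCocycle (R := R) T σ)
    {α β : G} (hc : T.comp α β) :
    σ α β * σ (T.mul α β) (T.inv (T.mul α β)) * σ (T.inv β) (T.inv α)
      = σ α (T.inv α) * σ β (T.inv β) := by
  have hxinv : T.inv (T.mul α β) = T.mul (T.inv β) (T.inv α) := hG.inv_mul hc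
  have hrβ : T.r β = T.r (T.inv α) := by rw [hG.r_inv, (hG.comp_iff α β).1 hc]
  have hcomp1 : T.comp β (T.inv (T.mul α β)) := by
    rw [hG.comp_iff, hG.r_inv, hG.s_mul _ _ hc]
  have hm1 : T.mul β (T.inv (T.mul α β)) = T.inv α := by
    rw [hxinv, ← hG.assoc β (T.inv β) (T.inv α) (hG.comp_inv_right β) (hG.comp_inv_inv hc)]
    show T.mul (T.mul β (T.inv β)) (T.inv α) = T.inv α
    rw [T.mul_inv_self, hrβ, hG.r_mul_self]
  have e1 := hσ.cocycle α β (T.inv (T.mul α β)) hc hcomp1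
  rw [hm1] at e1
  have e2 := hσ.cocycle β (T.inv β) (T.inv α) (hG.comp_inv_right β) (hG.comp_inv_inv hc)
  rw [show T.mul β (T.inv β) = T.r β from T.mul_inv_self β, hrβ, hσ.norm_left,
    mul_one, ← hxinv] at e2
  calc σ α β * σ (T.mul α β) (T.inv (T.mul α β)) * σ (T.inv β) (T.inv α)
      = σ α (T.inv α) * (σ β (T.inv (T.mul α β)) * σ (T.inv β) (T.inv α)) := by
        rw [e1, mul_assoc]
    _ = σ α (T.inv α) * σ β (T.inv β) := by rw [← e2]

/-- The twisted involution preserves the Steinberg carrier. -/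
lemma star_carrier (hT : T.IsTopGroupoid) {σ : G → G → Rˣ}
    (hσ : IsCocycle (R := R) T σ) {Tsub : Subgroup Rˣ} {c : R → R}
    (hc : IsTInverseInvolution Tsub c) {f : G → R}
    (hf : f ∈ steinbergCarrier G R) :
    convStar T σ c f ∈ steinbergCarrier G R := by
  have hG := hT.toIsGroupoid
  -- the unit-valued map is locally constant
  have hσR : Continuous (fun γ => ((σ γ (T.inv γ) : Rˣ) : R)) := by
    have h := hσ.continuousOn.comp_continuous
      (continuous_id.prodMk hT.continuous_inv)
      (fun γ => hG.comp_inv_right γ)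
    exact h
  have hσU : IsLocallyConstant (fun γ => σ γ (T.inv γ)) := by
    intro s
    have heq : (fun γ => σ γ (T.inv γ)) ⁻¹' s
        = (fun γ => ((σ γ (T.inv γ) : Rˣ) : R)) ⁻¹' (Units.val '' s) := by
      ext γ
      simp only [Set.mem_preimage, Set.mem_image]
      constructor
      · intro h; exact ⟨_, h, rfl⟩
      · rintro ⟨u, hu, hval⟩
        rwa [show u = σ γ (T.inv γ) from Units.ext hval] at hu
    rw [heq]
    exact ((IsLocallyConstant.iff_continuous _).2 hσR) _
  have hu : IsLocallyConstant (fun γ => (((σ γ (T.inv γ))⁻¹ : Rˣ) : R)) :=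
    hσU.comp (fun z : Rˣ => ((z⁻¹ : Rˣ) : R))
  have hcf : IsLocallyConstant (fun γ => c (f (T.inv γ))) := by
    have h1 : IsLocallyConstant (f ∘ T.inv) := hf.1.comp_continuous hT.continuous_inv
    exact h1.comp c
  have hlc : IsLocallyConstant (convStar T σ c f) := hu.comp₂ hcf (· * ·)
  refine ⟨hlc, IsCompact.of_isClosed_subset (hf.2.image hT.continuous_inv)
    (lc_support_isClosed hlc) ?_⟩
  intro γ hγ
  rw [Function.mem_support] at hγ
  have hfne : f (T.inv γ) ≠ 0 := by
    intro h0
    apply hγ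
    show (((σ γ (T.inv γ))⁻¹ : Rˣ) : R) * c (f (T.inv γ)) = 0
    rw [h0, tinv_zero hc, mul_zero]
  exact ⟨T.inv γ, hfne, hG.inv_inv γ⟩

end Aux7

section Aux8

set_option linter.unusedSectionVars false

open GroupoidStruct Function Set
open scoped Classical

variable {G : Type*} {R : Type*} [TopologicalSpace G] [T2Space G] [CommRing R]
  [TopologicalSpace R] [DiscreteTopology R]
variable {T : GroupoidStruct G}

lemma star_star (hG : T.IsGroupoid) {σ : G → G → Rˣ} (hσ : IsCocycle (R := R) T σ)
    {Tsub : Subgroup Rˣ} {c : R → R} (hc : IsTInverseInvolution Tsub c)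
    (hTval : ∀ a b, σ a b ∈ Tsub) (f : G → R) :
    convStar T σ c (convStar T σ c f) = f := by
  funext γ
  show (((σ γ (T.inv γ))⁻¹ : Rˣ) : R) * c (convStar T σ c f (T.inv γ)) = f γ
  have h1 : convStar T σ c f (T.inv γ)
      = (((σ (T.inv γ) γ)⁻¹ : Rˣ) : R) * c (f γ) := by
    show (((σ (T.inv γ) (T.inv (T.inv γ)))⁻¹ : Rˣ) : R) * c (f (T.inv (T.inv γ))) = _
    rw [hG.inv_inv]
  rw [h1, hc.2.2.1, hc.2.2.2.2 ((σ (T.inv γ) γ)⁻¹) (Subgroup.inv_mem _ (hTval _ _)),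
    hc.2.2.2.1, inv_inv, sigma_symm hG hσ γ, ← mul_assoc, ← Units.val_mul,
    inv_mul_cancel, Units.val_one, one_mul]

lemma star_add {σ : G → G → Rˣ} {Tsub : Subgroup Rˣ} {c : R → R}
    (hc : IsTInverseInvolution Tsub c) (f g : G → R) :
    convStar T σ c (f + g) = convStar T σ c f + convStar T σ c g := by
  funext γ
  show (((σ γ (T.inv γ))⁻¹ : Rˣ) : R) * c ((f + g) (T.inv γ)) = _
  rw [show (f + g) (T.inv γ) = f (T.inv γ) + g (T.inv γ) from rfl, hc.2.1, mul_add]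
  rfl

lemma star_smul {σ : G → G → Rˣ} {Tsub : Subgroup Rˣ} {c : R → R}
    (hc : IsTInverseInvolution Tsub c) (a : R) (f : G → R) :
    convStar T σ c (a • f) = c a • convStar T σ c f := by
  funext γ
  show (((σ γ (T.inv γ))⁻¹ : Rˣ) : R) * c ((a • f) (T.inv γ)) = _
  rw [show (a • f) (T.inv γ) = a * f (T.inv γ) from rfl, hc.2.2.1]
  show _ = c a * ((((σ γ (T.inv γ))⁻¹ : Rˣ) : R) * c (f (T.inv γ)))
  ring

lemma star_conv (hample : T.IsAmple) (hT : T.IsTopGroupoid) {σ : G → G → Rˣ}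
    (hσ : IsCocycle (R := R) T σ) {Tsub : Subgroup Rˣ} {c : R → R}
    (hc : IsTInverseInvolution Tsub c) (hTval : ∀ a b, σ a b ∈ Tsub)
    {f g : G → R} (hf : f ∈ steinbergCarrier G R) (hg : g ∈ steinbergCarrier G R) :
    convStar T σ c (conv T σ f g)
      = conv T σ (convStar T σ c g) (convStar T σ c f) := by
  have hG := hT.toIsGroupoid
  have hfstar : convStar T σ c f ∈ steinbergCarrier G R := star_carrier hT hσ hc hf
  funext γ
  show (((σ γ (T.inv γ))⁻¹ : Rˣ) : R) * c (conv T σ f g (T.inv γ)) = _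
  rw [conv_eq_sum T σ f g (T.inv γ) (pair_finite hample hG hf (T.inv γ)).toFinset
    (fun p hcp hmp hne => (pair_finite hample hG hf (T.inv γ)).mem_toFinset.2
      ⟨hcp, hmp, fun h0 => hne (by rw [h0, mul_zero, zero_mul])⟩)]
  rw [show c (∑ p ∈ (pair_finite hample hG hf (T.inv γ)).toFinset,
      if T.comp p.1 p.2 ∧ T.mul p.1 p.2 = T.inv γ then
        ((σ p.1 p.2 : Rˣ) : R) * f p.1 * g p.2 else 0)
    = ∑ p ∈ (pair_finite hample hG hf (T.inv γ)).toFinset,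
      c (if T.comp p.1 p.2 ∧ T.mul p.1 p.2 = T.inv γ then
        ((σ p.1 p.2 : Rˣ) : R) * f p.1 * g p.2 else 0) from
    map_sum (AddMonoidHom.mk' c hc.2.1) _ _, Finset.mul_sum]
  rw [conv_eq_sum T σ (convStar T σ c g) (convStar T σ c f) γ
    (pair_finite_snd hample hG hfstar γ).toFinset
    (fun x hcx hmx hne => (pair_finite_snd hample hG hfstar γ).mem_toFinset.2
      ⟨hcx, hmx, fun h0 => hne (by rw [h0, mul_zero])⟩)]
  refine Finset.sum_bij' (i := fun p _ => (T.inv p.2, T.inv p.1))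
    (j := fun x _ => (T.inv x.2, T.inv x.1)) ?_ ?_ ?_ ?_ ?_
  · -- membership forward
    rintro ⟨α, β⟩ hp
    obtain ⟨hcp, hmp, hfne⟩ := (pair_finite hample hG hf (T.inv γ)).mem_toFinset.1 hp
    refine (pair_finite_snd hample hG hfstar γ).mem_toFinset.2
      ⟨hG.comp_inv_inv hcp, ?_, ?_⟩
    · show T.mul (T.inv β) (T.inv α) = γ
      rw [← hG.inv_mul hcp, hmp, hG.inv_inv]
    · show convStar T σ c f (T.inv α) ≠ 0
      show (((σ (T.inv α) (T.inv (T.inv α)))⁻¹ : Rˣ) : R) * c (f (T.inv (T.inv α))) ≠ 0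
      rw [hG.inv_inv]
      intro h0
      exact tinv_ne_zero hc hfne ((Units.mul_right_eq_zero _).1 h0)
  · -- membership backward
    rintro ⟨u, v⟩ hx
    obtain ⟨hcx, hmx, hfsne⟩ := (pair_finite_snd hample hG hfstar γ).mem_toFinset.1 hx
    refine (pair_finite hample hG hf (T.inv γ)).mem_toFinset.2
      ⟨hG.comp_inv_inv hcx, ?_, ?_⟩
    · show T.mul (T.inv v) (T.inv u) = T.inv γ
      rw [← hG.inv_mul hcx, hmx]
    · show f (T.inv v) ≠ 0
      intro h0
      apply hfsne
      show (((σ v (T.inv v))⁻¹ : Rˣ) : R) * c (f (T.inv v)) = 0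
      rw [h0, tinv_zero hc, mul_zero]
  · rintro ⟨α, β⟩ hp
    show (T.inv (T.inv α), T.inv (T.inv β)) = (α, β)
    rw [hG.inv_inv, hG.inv_inv]
  · rintro ⟨u, v⟩ hx
    show (T.inv (T.inv u), T.inv (T.inv v)) = (u, v)
    rw [hG.inv_inv, hG.inv_inv]
  · -- values agree
    rintro ⟨α, β⟩ hp
    obtain ⟨hcp, hmp, hfne⟩ := (pair_finite hample hG hf (T.inv γ)).mem_toFinset.1 hp
    have hcx : T.comp (T.inv β) (T.inv α) := hG.comp_inv_inv hcp
    have hmx : T.mul (T.inv β) (T.inv α) = γ := by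
      rw [← hG.inv_mul hcp, hmp, hG.inv_inv]
    rw [if_pos ⟨hcp, hmp⟩, if_pos ⟨hcx, hmx⟩]
    -- unfold the stars on the right
    have hstar_g : convStar T σ c g (T.inv β)
        = (((σ β (T.inv β))⁻¹ : Rˣ) : R) * c (g β) := by
      show (((σ (T.inv β) (T.inv (T.inv β)))⁻¹ : Rˣ) : R) * c (g (T.inv (T.inv β))) = _
      rw [hG.inv_inv, ← sigma_symm hG hσ β]
    have hstar_f : convStar T σ c f (T.inv α)
        = (((σ α (T.inv α))⁻¹ : Rˣ) : R) * c (f α) := by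
      show (((σ (T.inv α) (T.inv (T.inv α)))⁻¹ : Rˣ) : R) * c (f (T.inv (T.inv α))) = _
      rw [hG.inv_inv, ← sigma_symm hG hσ α]
    beta_reduce
    rw [hstar_g, hstar_f, hc.2.2.1, hc.2.2.1, hc.2.2.2.2 (σ α β) (hTval α β)]
    -- rewrite `γ` in terms of `αβ`
    have hγx : γ = T.inv (T.mul α β) := by rw [hmp, hG.inv_inv]
    have hσγ : ((σ γ (T.inv γ))⁻¹ : Rˣ)
        = ((σ (T.mul α β) (T.inv (T.mul α β)))⁻¹ : Rˣ) := by
      rw [hγx, hG.inv_inv, ← sigma_symm hG hσ (T.mul α β)]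
    rw [hσγ]
    -- the unit identity
    have hstar := star_identity hG hσ hcp
    have hBv : σ (T.inv β) (T.inv α)
        = (σ α β * σ (T.mul α β) (T.inv (T.mul α β)))⁻¹
          * (σ α (T.inv α) * σ β (T.inv β)) := by
      rw [← hstar]; group
    have hunit : ((σ (T.mul α β) (T.inv (T.mul α β)))⁻¹ : Rˣ) * ((σ α β)⁻¹ : Rˣ)
        = σ (T.inv β) (T.inv α) * ((σ β (T.inv β))⁻¹ : Rˣ)
          * ((σ α (T.inv α))⁻¹ : Rˣ) := by
      rw [hBv]; group
    have hunitR := congrArg (fun u : Rˣ => (u : R)) hunit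
    simp only [Units.val_mul] at hunitR
    linear_combination (c (f α) * c (g β)) * hunitR

end Aux8
/-- For an ample Hausdorff groupoid `G` and a continuous
normalised 2-cocycle `σ : G⁽²⁾ → Rˣ`, the twisted Steinberg algebra
`A_R(G, σ)` is an associative `R`-algebra under the twisted convolution
product; if moreover `R` has a `T`-inverse involution `c` for some
`Tsub ≤ Rˣ` and `σ` is `Tsub`-valued, then `f* (γ) = σ(γ,γ⁻¹)⁻¹ c(f(γ⁻¹))`
is an involution making `A_R(G, σ)` a `*`-algebra over `R`. -/
theorem twistedSteinbergAlgebra_isAlgebra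
    {G R : Type*} [TopologicalSpace G] [T2Space G] [LocallyCompactSpace G]
    [CommRing R] [TopologicalSpace R] [DiscreteTopology R]
    (T : GroupoidStruct G) (hT : T.IsTopGroupoid) (hample : T.IsAmple)
    (σ : G → G → Rˣ) (hσ : IsCocycle (R := R) T σ) :
    -- `A_R(G,σ)` is closed under the twisted convolution
    (∀ f g, f ∈ steinbergCarrier G R → g ∈ steinbergCarrier G R →
        conv T σ f g ∈ steinbergCarrier G R)
    -- the twisted convolution is associative
    ∧ (∀ f g h, f ∈ steinbergCarrier G R → g ∈ steinbergCarrier G R →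
        h ∈ steinbergCarrier G R →
        conv T σ (conv T σ f g) h = conv T σ f (conv T σ g h))
    -- the twisted convolution is biadditive
    ∧ (∀ f g h, f ∈ steinbergCarrier G R → g ∈ steinbergCarrier G R →
        h ∈ steinbergCarrier G R →
        conv T σ (f + g) h = conv T σ f h + conv T σ g h
          ∧ conv T σ f (g + h) = conv T σ f g + conv T σ f h)
    -- and `R`-bilinear
    ∧ (∀ (a : R) (f g : G → R), f ∈ steinbergCarrier G R →
        g ∈ steinbergCarrier G R →
        conv T σ (a • f) g = a • conv T σ f g
          ∧ conv T σ f (a • g) = a • conv T σ f g)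
    -- if `R` has a `T`-inverse involution and `σ` is `Tsub`-valued, then
    -- `A_R(G,σ)` is a `*`-algebra over `R`
    ∧ (∀ (Tsub : Subgroup Rˣ) (c : R → R), IsTInverseInvolution Tsub c →
        (∀ a b, σ a b ∈ Tsub) →
        (∀ f, f ∈ steinbergCarrier G R →
            convStar T σ c f ∈ steinbergCarrier G R)
        ∧ (∀ f g, f ∈ steinbergCarrier G R → g ∈ steinbergCarrier G R →
            convStar T σ c (conv T σ f g)
              = conv T σ (convStar T σ c g) (convStar T σ c f))
        ∧ (∀ f, f ∈ steinbergCarrier G R →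
            convStar T σ c (convStar T σ c f) = f)
        ∧ (∀ f g : G → R,
            convStar T σ c (f + g) = convStar T σ c f + convStar T σ c g)
        ∧ (∀ (a : R) (f : G → R),
            convStar T σ c (a • f) = c a • convStar T σ c f)) := by
  have hG := hT.toIsGroupoid
  refine ⟨?_, ?_, ?_, ?_, ?_⟩
  · exact fun f g hf hg => conv_carrier hample hT σ hσ hf hg
  · exact fun f g h hf hg hh => funext fun γ => conv_assoc hample hT σ hσ hf hg hh γ
  · intro f g h hf hg hh
    constructor
    · exact funext fun γ => conv_add_left T hample hG σ hf hg γ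
    · exact funext fun γ => conv_add_right T hample hG σ hg hh γ
  · intro a f g hf hg
    constructor
    · exact funext fun γ => conv_smul_left T hample hG σ a hf γ
    · exact funext fun γ => conv_smul_right T hample hG σ a hg γ
  · intro Tsub c hinv hval
    refine ⟨fun f hf => star_carrier hT hσ hinv hf,
      fun f g hf hg => star_conv hample hT hσ hinv hval hf hg,
      fun f hf => star_star hG hσ hinv hval f,
      fun f g => star_add hinv f g,
      fun a f => star_smul hinv a f⟩
end TwistedSteinberg
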